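/- arXiv:2105.04228 — 4 statements merged into one kernel-verified Lean document; each statement's English description precedes it below -/
import Mathlib

section
/- For every integer $j \geq 1$, $\mathbb{E}[(1 - \tilde Y_j)^k] \to 0$ superpolynomially slowly is quantified as follows: for every $\delta > 0$, with $M_j := e^{j(1+\delta)}$, one has $\mathbb{P}(\tilde\tau_j \geq M_j) = \mathcal{O}(e^{-cj})$ for some constant $c > 0$ depending on $\delta$; in particular $\sum_j \mathbb{P}(\tilde\tau_j \geq e^{j(1+\delta)}) < \infty$. -/
open MeasureTheory ProbabilityTheory

open Real Set in
lemma aux_pointwise {ε : ℝ} (hε0 : 0 < ε) (hε1 : ε ≤ 1) {k : ℕ} (hk : 1 ≤ k) {t : ℝ} (ht : 0 < t) :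
    Real.exp (-(ε * t)) * (1 - Real.exp (-t)) ^ k ≤ (k : ℝ) ^ (-ε) := by
  set u := Real.exp (-t) with hu
  have hu0 : 0 < u := Real.exp_pos _
  have hu1 : u < 1 := by
    rw [hu]; exact Real.exp_lt_one_iff.mpr (by linarith)
  have hk0 : (0:ℝ) < k := by exact_mod_cast hk
  have h1 : (1 - u) ^ k ≤ Real.exp (-((k:ℝ) * u)) := by
    calc (1 - u) ^ k ≤ (Real.exp (-u)) ^ k := by
          apply pow_le_pow_left₀ (by linarith)
          linarith [Real.add_one_le_exp (-u)]
      _ = Real.exp (-((k:ℝ) * u)) := by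
          rw [← Real.exp_nat_mul]; ring_nf
  have h2 : Real.exp (-(ε * t)) = u ^ ε := by
    rw [hu, ← Real.exp_mul]; ring_nf
  rw [h2]
  have key : ∀ x : ℝ, 0 < x → x ^ ε * Real.exp (-x) ≤ 1 := by
    intro x hx
    rcases le_or_gt x 1 with h | h
    · have h1 : x ^ ε ≤ 1 := Real.rpow_le_one hx.le h hε0.le
      have h2 : Real.exp (-x) ≤ 1 := Real.exp_le_one_iff.mpr (by linarith)
      nlinarith [Real.rpow_nonneg hx.le ε, Real.exp_pos (-x)]
    · have h1 : x ^ ε ≤ x ^ (1:ℝ) := Real.rpow_le_rpow_of_exponent_le h.le hε1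
      rw [Real.rpow_one] at h1
      have h2 : x ≤ Real.exp x := by linarith [Real.add_one_le_exp x]
      have h3 : x ^ ε * Real.exp (-x) ≤ Real.exp x * Real.exp (-x) := by
        apply mul_le_mul_of_nonneg_right (h1.trans h2) (Real.exp_pos _).le
      rw [← Real.exp_add] at h3; simpa using h3
  have hx := key ((k:ℝ) * u) (by positivity)
  have hsplit : ((k:ℝ) * u) ^ ε = (k:ℝ) ^ ε * u ^ ε := Real.mul_rpow hk0.le hu0.le
  calc u ^ ε * (1 - u) ^ k ≤ u ^ ε * Real.exp (-((k:ℝ) * u)) := by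
        apply mul_le_mul_of_nonneg_left h1 (Real.rpow_nonneg hu0.le ε)
    _ ≤ (k:ℝ) ^ (-ε) := by
        rw [Real.rpow_neg hk0.le, inv_eq_one_div, le_div_iff₀ (by positivity : (0:ℝ) < (k:ℝ) ^ ε)]
        rw [hsplit] at hx
        linear_combination hx

lemma aux_tail {ε : ℝ} (hε0 : 0 < ε) (hε1 : ε ≤ 1/2) {j k : ℕ} (hj : 1 ≤ j) (hk : 1 ≤ k) :
    (1 / (j.factorial : ℝ)) *
        ∫ t in Set.Ioi (0 : ℝ), t ^ (j - 1) * Real.exp (-t) * (1 - Real.exp (-t)) ^ k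
      ≤ (k : ℝ) ^ (-ε) * ((1 - ε)⁻¹) ^ j := by
  have hε1' : (0:ℝ) < 1 - ε := by linarith
  have hk0 : (0:ℝ) < k := by exact_mod_cast hk
  set f : ℝ → ℝ := fun t => t ^ (j - 1) * Real.exp (-t) * (1 - Real.exp (-t)) ^ k with hf
  set g : ℝ → ℝ := fun t => t ^ ((j:ℝ) - 1) * Real.exp (-((1 - ε) * t)) * (k:ℝ) ^ (-ε) with hg
  have hfg : ∀ t ∈ Set.Ioi (0:ℝ), f t ≤ g t := by
    intro t ht
    simp only [Set.mem_Ioi] at ht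
    have hpow : t ^ (j - 1) = t ^ ((j:ℝ) - 1) := by
      rw [← Real.rpow_natCast t (j-1), Nat.cast_sub hj, Nat.cast_one]
    have hsplit : Real.exp (-t) = Real.exp (-((1-ε)*t)) * Real.exp (-(ε*t)) := by
      rw [← Real.exp_add]; ring_nf
    have hb := aux_pointwise hε0 (by linarith) hk ht
    have htp : (0:ℝ) ≤ t ^ ((j:ℝ) - 1) := Real.rpow_nonneg ht.le _
    calc f t = t ^ ((j:ℝ) - 1) * Real.exp (-((1-ε)*t)) *
          (Real.exp (-(ε*t)) * (1 - Real.exp (-t)) ^ k) := by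
          rw [hf]; simp only []; rw [hpow, hsplit]; ring
      _ ≤ t ^ ((j:ℝ) - 1) * Real.exp (-((1-ε)*t)) * ((k:ℝ) ^ (-ε)) := by
          apply mul_le_mul_of_nonneg_left hb (by positivity)
      _ = g t := rfl
  have hf0 : ∀ t ∈ Set.Ioi (0:ℝ), 0 ≤ f t := by
    intro t ht
    simp only [Set.mem_Ioi] at ht
    have h1 : (0:ℝ) ≤ 1 - Real.exp (-t) := by
      have := Real.exp_le_one_iff.mpr (by linarith : -t ≤ 0); linarith
    positivity
  have hgint : IntegrableOn g (Set.Ioi (0:ℝ)) := by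
    apply Integrable.mul_const
    have h := integrableOn_rpow_mul_exp_neg_mul_rpow
      (p := 1) (s := (j:ℝ) - 1) (b := 1 - ε) (by
        have : (1:ℝ) ≤ j := by exact_mod_cast hj
        linarith) zero_lt_one hε1'
    have heq : (fun x : ℝ => x ^ ((j:ℝ) - 1) * Real.exp (-((1 - ε) * x))) =
        (fun x : ℝ => x ^ ((j:ℝ) - 1) * Real.exp (-(1 - ε) * x ^ (1:ℝ))) := by
      funext x; rw [Real.rpow_one]; ring_nf
    rw [heq]; exact h
  have hfmeas : AEStronglyMeasurable f (volume.restrict (Set.Ioi (0:ℝ))) := by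
    apply Continuous.aestronglyMeasurable
    fun_prop
  have hfint : IntegrableOn f (Set.Ioi (0:ℝ)) := by
    apply Integrable.mono hgint hfmeas
    rw [ae_restrict_iff' measurableSet_Ioi]
    filter_upwards with t ht
    rw [Real.norm_eq_abs, Real.norm_eq_abs, abs_of_nonneg (hf0 t ht)]
    exact (hfg t ht).trans (le_abs_self _)
  have hint_le : ∫ t in Set.Ioi (0:ℝ), f t ≤ ∫ t in Set.Ioi (0:ℝ), g t :=
    setIntegral_mono_on hfint hgint measurableSet_Ioi hfg
  have hgval : ∫ t in Set.Ioi (0:ℝ), g t =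
      ((1/(1-ε)) ^ (j:ℝ) * Real.Gamma j) * (k:ℝ) ^ (-ε) := by
    rw [hg]
    rw [MeasureTheory.integral_mul_const]
    rw [Real.integral_rpow_mul_exp_neg_mul_Ioi (by exact_mod_cast hj : (0:ℝ) < (j:ℝ)) hε1']
  have hGamma : Real.Gamma (j:ℝ) = ((j-1).factorial : ℝ) := by
    have : (j:ℝ) = ((j - 1 : ℕ) : ℝ) + 1 := by
      rw [Nat.cast_sub hj]; ring
    rw [this, Real.Gamma_nat_eq_factorial]
  have hfac : (j.factorial : ℝ) = (j : ℝ) * ((j-1).factorial : ℝ) := by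
    rw [← Nat.cast_mul, ← Nat.succ_pred_eq_of_pos hj]
    simp [Nat.factorial_succ]
  have hj0 : (0:ℝ) < j := by exact_mod_cast hj
  have hfacpos : (0:ℝ) < (j.factorial : ℝ) := by exact_mod_cast j.factorial_pos
  calc (1 / (j.factorial : ℝ)) * ∫ t in Set.Ioi (0:ℝ), f t
      ≤ (1 / (j.factorial : ℝ)) * ∫ t in Set.Ioi (0:ℝ), g t := by
        apply mul_le_mul_of_nonneg_left hint_le (by positivity)
    _ = (1 / (j.factorial : ℝ)) * (((1/(1-ε)) ^ (j:ℝ) * ((j-1).factorial : ℝ)) * (k:ℝ) ^ (-ε)) := by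
        rw [hgval, hGamma]
    _ ≤ (k : ℝ) ^ (-ε) * ((1 - ε)⁻¹) ^ j := by
        rw [hfac]
        have h1 : (1/(1-ε)) ^ (j:ℝ) = ((1-ε)⁻¹) ^ j := by
          rw [Real.rpow_natCast, one_div]
        rw [h1]
        have h2 : (0:ℝ) < ((1-ε)⁻¹) ^ j := by positivity
        have h3 : (0:ℝ) ≤ (k:ℝ) ^ (-ε) := Real.rpow_nonneg hk0.le _
        have h4 : (0:ℝ) < ((j-1).factorial : ℝ) := by exact_mod_cast (j-1).factorial_pos
        rw [div_mul_eq_mul_div, one_mul, div_le_iff₀ (by positivity)]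
        have hj1 : (1:ℝ) ≤ (j:ℝ) := by exact_mod_cast hj
        have h5 : (0:ℝ) ≤ (k:ℝ) ^ (-ε) * ((1-ε)⁻¹ ^ j) * ((j-1).factorial : ℝ) * ((j:ℝ) - 1) :=
          mul_nonneg (mul_nonneg (mul_nonneg h3 h2.le) h4.le) (by linarith)
        nlinarith [h5]

lemma aux_c_pos {δ ε : ℝ} (hδ : 0 < δ) (hε0 : 0 < ε) (hε12 : ε ≤ 1/2) (hεδ : ε ≤ δ/4) :
    0 < ε * (1 + δ) + Real.log (1 - ε) := by
  have h1 : Real.exp (-(ε + 2*ε^2)) ≤ 1 - ε := by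
    rw [Real.exp_neg]
    rw [inv_le_comm₀ (Real.exp_pos _) (by linarith)]
    calc (1-ε)⁻¹ ≤ 1 + ε + 2*ε^2 := by
          rw [inv_le_iff_one_le_mul₀ (by linarith)]
          nlinarith
      _ ≤ Real.exp (ε + 2*ε^2) := by
          have := Real.add_one_le_exp (ε + 2*ε^2); linarith
  have h2 : -(ε + 2*ε^2) ≤ Real.log (1 - ε) := by
    have := Real.log_le_log (Real.exp_pos _) h1
    rwa [Real.log_exp] at this
  nlinarith


/-- Exponential upper-tail bound for the jumping times: for every `δ > 0`, with
`M_j = e^{j(1+δ)}`, one has `μ(τ_j ≥ M_j) = O(e^{-cj})` for some `c > 0`; in particular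
`∑_j μ(τ_j ≥ e^{j(1+δ)}) < ∞`. -/
theorem stmt4 {Ω : Type*} [MeasurableSpace Ω] (μ : Measure Ω) [IsProbabilityMeasure μ]
    (τ : ℕ → Ω → ℕ) (hτ : ∀ j, Measurable (τ j))
    (hdist : ∀ j, 1 ≤ j → ∀ k : ℕ, (μ {ω | k < τ j ω}).toReal =
      (1 / (j.factorial : ℝ)) *
        ∫ t in Set.Ioi (0 : ℝ), t ^ (j - 1) * Real.exp (-t) * (1 - Real.exp (-t)) ^ k)
    (δ : ℝ) (hδ : 0 < δ) :
    (∃ c > (0 : ℝ), ∃ C : ℝ, ∀ j : ℕ, 1 ≤ j →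
        (μ {ω | Real.exp ((j : ℝ) * (1 + δ)) ≤ (τ j ω : ℝ)}).toReal ≤ C * Real.exp (-c * j)) ∧
      Summable (fun j : ℕ =>
        (μ {ω | Real.exp ((j : ℝ) * (1 + δ)) ≤ (τ j ω : ℝ)}).toReal) := by
  set ε : ℝ := min (δ/4) (1/2) with hε
  have hε0 : 0 < ε := lt_min (by linarith) (by norm_num)
  have hε12 : ε ≤ 1/2 := min_le_right _ _
  have hεδ : ε ≤ δ/4 := min_le_left _ _
  set c : ℝ := ε * (1 + δ) + Real.log (1 - ε) with hc
  have hcpos : 0 < c := aux_c_pos hδ hε0 hε12 hεδ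
  have key : ∀ j : ℕ, 1 ≤ j →
      (μ {ω | Real.exp ((j : ℝ) * (1 + δ)) ≤ (τ j ω : ℝ)}).toReal ≤ 2 * Real.exp (-c * j) := by
    intro j hj
    set x : ℝ := Real.exp ((j : ℝ) * (1 + δ)) with hx
    have hj1 : (1:ℝ) ≤ (j : ℝ) := by exact_mod_cast hj
    have hx2 : (2:ℝ) ≤ x := by
      have h1 : (2:ℝ) ≤ Real.exp 1 := by have := Real.add_one_le_exp 1; linarith
      have h2 : Real.exp 1 ≤ x := Real.exp_le_exp.mpr (by nlinarith)
      linarith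
    have hx0 : 0 < x := by linarith
    have hceil1 : 1 ≤ ⌈x⌉₊ := by
      rw [Nat.one_le_ceil_iff]; exact hx0
    set k : ℕ := ⌈x⌉₊ - 1 with hk
    have hkcast : (k:ℝ) = (⌈x⌉₊ : ℝ) - 1 := by
      rw [hk, Nat.cast_sub hceil1, Nat.cast_one]
    have hk1 : 1 ≤ k := by
      have : (1:ℕ) < ⌈x⌉₊ := by
        rw [Nat.lt_ceil]; push_cast; linarith
      omega
    have hkx : (k:ℝ) < x := by
      rw [hkcast]
      have := Nat.ceil_lt_add_one hx0.le
      linarith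
    have hxk : x/2 ≤ (k:ℝ) := by
      rw [hkcast]
      have := Nat.le_ceil x
      linarith
    -- set inclusion
    have hsub : {ω | x ≤ (τ j ω : ℝ)} ⊆ {ω | k < τ j ω} := by
      intro ω hω
      simp only [Set.mem_setOf_eq] at hω ⊢
      have : (k:ℝ) < (τ j ω : ℝ) := lt_of_lt_of_le hkx hω
      exact_mod_cast this
    have hmono : (μ {ω | x ≤ (τ j ω : ℝ)}).toReal ≤ (μ {ω | k < τ j ω}).toReal := by
      apply ENNReal.toReal_mono (measure_ne_top μ _)
      exact measure_mono hsub
    have hb1 := aux_tail hε0 hε12 hj hk1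
    rw [← hdist j hj k] at hb1
    -- bound k^(-ε)
    have hk0 : (0:ℝ) < k := by exact_mod_cast hk1
    have hbk : (k:ℝ) ^ (-ε) ≤ 2 * Real.exp (-(ε * ((j:ℝ) * (1 + δ)))) := by
      have h1 : (x/2) ^ (-ε) = 2 ^ ε * x ^ (-ε) := by
        rw [Real.div_rpow hx0.le (by norm_num : (0:ℝ) ≤ 2),
          Real.rpow_neg (by norm_num : (0:ℝ) ≤ 2)]
        rw [div_eq_mul_inv, inv_inv, mul_comm]
      have h2 : (k:ℝ) ^ (-ε) ≤ (x/2) ^ (-ε) := by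
        rw [Real.rpow_neg hk0.le, Real.rpow_neg (by positivity)]
        apply inv_anti₀ (Real.rpow_pos_of_pos (by positivity) _)
        exact Real.rpow_le_rpow (by positivity) hxk hε0.le
      have h3 : x ^ (-ε) = Real.exp (-(ε * ((j:ℝ) * (1 + δ)))) := by
        rw [hx, ← Real.exp_mul]; ring_nf
      have h4 : (2:ℝ) ^ ε ≤ 2 := by
        calc (2:ℝ) ^ ε ≤ 2 ^ (1:ℝ) :=
              Real.rpow_le_rpow_of_exponent_le one_le_two (by linarith)
          _ = 2 := Real.rpow_one 2
      calc (k:ℝ) ^ (-ε) ≤ 2 ^ ε * x ^ (-ε) := by rw [← h1]; exact h2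
        _ ≤ 2 * Real.exp (-(ε * ((j:ℝ) * (1 + δ)))) := by
            rw [h3]
            exact mul_le_mul_of_nonneg_right h4 (Real.exp_pos _).le
    have hinv : ((1 - ε)⁻¹) ^ j = Real.exp (-Real.log (1 - ε) * j) := by
      have h0 : (0:ℝ) < 1 - ε := by linarith
      have h5 : Real.exp (-Real.log (1 - ε) * (j:ℝ)) = (Real.exp (-Real.log (1 - ε))) ^ j := by
        rw [← Real.exp_nat_mul]; ring_nf
      rw [h5, Real.exp_neg, Real.exp_log h0]
    calc (μ {ω | x ≤ (τ j ω : ℝ)}).toReal ≤ (μ {ω | k < τ j ω}).toReal := hmono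
      _ ≤ (k : ℝ) ^ (-ε) * ((1 - ε)⁻¹) ^ j := hb1
      _ ≤ (2 * Real.exp (-(ε * ((j:ℝ) * (1 + δ))))) * Real.exp (-Real.log (1 - ε) * j) := by
          rw [hinv]
          exact mul_le_mul_of_nonneg_right hbk (Real.exp_pos _).le
      _ = 2 * Real.exp (-c * j) := by
          rw [mul_assoc, ← Real.exp_add, hc]; ring_nf
  refine ⟨⟨c, hcpos, 2, key⟩, ?_⟩
  refine Summable.of_nonneg_of_le (f := fun j : ℕ => 2 * Real.exp (-c * j))
    (fun j => ENNReal.toReal_nonneg) (fun j => ?_) ?_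
  · 
    rcases Nat.eq_zero_or_pos j with rfl | hj
    · simp only [Nat.cast_zero, mul_zero, Real.exp_zero, mul_one]
      have h1 : μ {ω | Real.exp ((0:ℝ) * (1 + δ)) ≤ ((τ 0 ω : ℕ) : ℝ)} ≤ 1 := prob_le_one
      calc (μ _).toReal ≤ (1 : ENNReal).toReal := ENNReal.toReal_mono (by simp) h1
        _ ≤ 2 := by norm_num
    · exact key j hj
  · have h1 : Summable (fun j : ℕ => Real.exp (-c) ^ j) :=
      summable_geometric_of_lt_one (Real.exp_pos _).le
        (Real.exp_lt_one_iff.mpr (by linarith))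
    have h2 : (fun j : ℕ => 2 * Real.exp (-c * j)) = (fun j : ℕ => 2 * Real.exp (-c) ^ j) := by
      funext j; rw [← Real.exp_nat_mul]; ring_nf
    rw [h2]
    exact h1.mul_left 2
end

section
/- Let $m \geq 2$ and define $\lambda_i(t) := (1-e^{-t})^{i-1} e^{-t}$ for $1 \leq i \leq m-1$ and $\lambda_m(t) := (1-e^{-t})^{m-1}$. Then $\int_0^\infty \Big(\sum_{i=1}^{m-1} i\, \lambda_i(t)\Big) e^{-\int_0^t \lambda_m(s)\,ds}\,dt + m = e^{H_{m-1}}$, where $H_{m-1}$ is the $(m-1)$-th harmonic number. -/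
open MeasureTheory

noncomputable def sphi (n : ℕ) (t : ℝ) : ℝ :=
  ∑ i ∈ Finset.range n, (1 - Real.exp (-t)) ^ (i + 1) / (i + 1)

lemma stmt10_sum_id (n : ℕ) (x : ℝ) :
    (∑ i ∈ Finset.Icc 1 n, (i : ℝ) * x ^ (i - 1)) * (1 - x)
      = (∑ i ∈ Finset.range n, x ^ i) - n * x ^ n := by
  induction n with
  | zero => simp
  | succ n ih =>
    rw [Finset.sum_Icc_succ_top (by omega), Finset.sum_range_succ]
    have h1 : n + 1 - 1 = n := by omega
    rw [h1]
    push_cast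
    linear_combination ih

lemma hasDerivAt_sphi (n : ℕ) (t : ℝ) :
    HasDerivAt (sphi n)
      ((∑ i ∈ Finset.range n, (1 - Real.exp (-t)) ^ i) * Real.exp (-t)) t := by
  have hbase : HasDerivAt (fun u : ℝ => 1 - Real.exp (-u)) (Real.exp (-t)) t := by
    have := ((hasDerivAt_neg t).exp).const_sub 1
    simpa using this
  have hterm : ∀ i ∈ Finset.range n, HasDerivAt
      (fun u : ℝ => (1 - Real.exp (-u)) ^ (i + 1) / (i + 1))
      ((1 - Real.exp (-t)) ^ i * Real.exp (-t)) t := by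
    intro i _
    have h2 := (hbase.pow (i + 1)).div_const ((i : ℝ) + 1)
    refine h2.congr_deriv (Eq.symm ?_)
    have : ((i : ℝ) + 1) ≠ 0 := by positivity
    rw [Nat.add_sub_cancel]; push_cast
    field_simp
  have := HasDerivAt.fun_sum hterm
  rw [Finset.sum_mul]
  exact this

lemma hasDerivAt_sub_sphi (n : ℕ) (t : ℝ) :
    HasDerivAt (fun u : ℝ => u - sphi n u) ((1 - Real.exp (-t)) ^ n) t := by
  have := (hasDerivAt_id t).sub (hasDerivAt_sphi n t)
  refine this.congr_deriv (Eq.symm ?_)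
  have hg := geom_sum_mul (1 - Real.exp (-t)) n
  linear_combination -hg

lemma sphi_zero (n : ℕ) : sphi n 0 = 0 := by
  simp [sphi]

lemma inner_integral (n : ℕ) (t : ℝ) :
    (∫ s in (0:ℝ)..t, (1 - Real.exp (-s)) ^ n) = t - sphi n t := by
  have h := intervalIntegral.integral_eq_sub_of_hasDerivAt
    (f := fun u : ℝ => u - sphi n u)
    (fun s _ => hasDerivAt_sub_sphi n s)
    (Continuous.intervalIntegrable (by continuity) 0 t)
  rw [h]
  simp [sphi_zero]

lemma sphi_le (n : ℕ) (t : ℝ) (ht : 0 ≤ t) : sphi n t ≤ n := by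
  have hx0 : 0 ≤ 1 - Real.exp (-t) := by
    have : Real.exp (-t) ≤ 1 := Real.exp_le_one_iff.mpr (by linarith)
    linarith
  have hx1 : 1 - Real.exp (-t) ≤ 1 := by linarith [Real.exp_pos (-t)]
  calc sphi n t ≤ ∑ i ∈ Finset.range n, (1:ℝ) := by
        apply Finset.sum_le_sum
        intro i _
        rw [div_le_one (by positivity)]
        calc (1 - Real.exp (-t)) ^ (i+1) ≤ 1 ^ (i+1) := by
              exact pow_le_pow_left₀ hx0 hx1 _
          _ = 1 := one_pow _
          _ ≤ (i:ℝ) + 1 := le_add_of_nonneg_left (Nat.cast_nonneg i)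
    _ = n := by simp

lemma continuous_sphi (n : ℕ) : Continuous (sphi n) := by
  unfold sphi
  apply continuous_finset_sum
  intro i _
  fun_prop

lemma tendsto_sphi (n : ℕ) :
    Filter.Tendsto (sphi n) Filter.atTop
      (nhds (∑ i ∈ Finset.range n, ((i:ℝ)+1)⁻¹)) := by
  apply tendsto_finset_sum
  intro i _
  have h1 : Filter.Tendsto (fun t : ℝ => 1 - Real.exp (-t)) Filter.atTop (nhds 1) := by
    have := Real.tendsto_exp_atBot.comp (Filter.tendsto_neg_atTop_atBot)
    simpa using (tendsto_const_nhds (x := (1:ℝ))).sub this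
  have h2 := (h1.pow (i+1)).div_const ((i:ℝ)+1)
  simpa [one_div] using h2

theorem stmt10' (m : ℕ) (hm : 2 ≤ m) :
    (∫ t in Set.Ioi (0 : ℝ),
        (∑ i ∈ Finset.Icc 1 (m - 1), (i : ℝ) * (1 - Real.exp (-t)) ^ (i - 1) * Real.exp (-t)) *
          Real.exp (-(∫ s in (0 : ℝ)..t, (1 - Real.exp (-s)) ^ (m - 1)))) + (m : ℝ) =
      Real.exp ((harmonic (m - 1) : ℚ) : ℝ) := by
  set n := m - 1 with hn
  have hmn : (m : ℝ) = (n : ℝ) + 1 := by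
    rw [hn]; push_cast [Nat.cast_sub (by omega : 1 ≤ m)]; ring
  set H : ℝ := ∑ i ∈ Finset.range n, ((i:ℝ)+1)⁻¹ with hH
  have hHcast : ((harmonic n : ℚ) : ℝ) = H := by
    rw [harmonic, hH]; push_cast; rfl
  set F : ℝ → ℝ := fun t => Real.exp (sphi n t) + n * Real.exp (sphi n t - t) with hF
  set f' : ℝ → ℝ := fun t =>
    (∑ i ∈ Finset.Icc 1 n, (i : ℝ) * (1 - Real.exp (-t)) ^ (i - 1) * Real.exp (-t)) *
      Real.exp (-(t - sphi n t)) with hf'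
  -- rewrite integrand
  have hre : (∫ t in Set.Ioi (0 : ℝ),
        (∑ i ∈ Finset.Icc 1 (m - 1), (i : ℝ) * (1 - Real.exp (-t)) ^ (i - 1) * Real.exp (-t)) *
          Real.exp (-(∫ s in (0 : ℝ)..t, (1 - Real.exp (-s)) ^ (m - 1))))
      = ∫ t in Set.Ioi (0:ℝ), f' t := by
    apply MeasureTheory.integral_congr_ae
    filter_upwards with t
    rw [hf', inner_integral]
  -- F has derivative f'
  have hderiv : ∀ t : ℝ, HasDerivAt F (f' t) t := by
    intro t
    have h1 := (hasDerivAt_sphi n t).exp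
    have h2 := (((hasDerivAt_sphi n t).sub (hasDerivAt_id t)).exp).const_mul (n : ℝ)
    have h3 := h1.add h2
    refine h3.congr_deriv (Eq.symm ?_)
    simp only [hf', Pi.sub_apply, id_eq, neg_sub]
    set a := Real.exp (-t)
    set S := ∑ i ∈ Finset.range n, (1 - a) ^ i with hS
    set P := Real.exp (sphi n t - t) with hP
    have hPa : Real.exp (sphi n t) * a = P := by
      rw [hP, ← Real.exp_add]; ring_nf
    have hsum := stmt10_sum_id n (1 - a)
    have hg := geom_sum_mul (1 - a) n
    rw [← Finset.sum_mul]
    linear_combination P * hsum + (n:ℝ) * P * hg - S * hPa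
  -- integrability of f'
  have hint : MeasureTheory.IntegrableOn f' (Set.Ioi (0:ℝ)) := by
    have hg : MeasureTheory.IntegrableOn
        (fun t : ℝ => (n^2 * Real.exp n) * Real.exp (-1 * t)) (Set.Ioi (0:ℝ)) :=
      (exp_neg_integrableOn_Ioi 0 one_pos).const_mul _
    apply MeasureTheory.Integrable.mono' hg
    · apply Continuous.aestronglyMeasurable
      rw [hf']
      apply Continuous.mul
      · apply continuous_finset_sum
        intro i _
        fun_prop
      · apply Real.continuous_exp.comp
        exact (continuous_id.sub (continuous_sphi n)).neg
    · rw [MeasureTheory.ae_restrict_iff' measurableSet_Ioi]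
      filter_upwards with t ht
      have ht' : (0:ℝ) ≤ t := le_of_lt ht
      have ha1 : Real.exp (-t) ≤ 1 := Real.exp_le_one_iff.mpr (by linarith)
      have ha0 : 0 < Real.exp (-t) := Real.exp_pos _
      have hx0 : (0:ℝ) ≤ 1 - Real.exp (-t) := by linarith
      have hx1 : 1 - Real.exp (-t) ≤ 1 := by linarith
      have hsumle : (∑ i ∈ Finset.Icc 1 n, (i : ℝ) * (1 - Real.exp (-t)) ^ (i - 1) * Real.exp (-t))
          ≤ n^2 := by
        calc _ ≤ ∑ i ∈ Finset.Icc 1 n, (n : ℝ) := by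
              apply Finset.sum_le_sum
              intro i hi
              have hi' : i ≤ n := (Finset.mem_Icc.mp hi).2
              have hp1 : (1 - Real.exp (-t)) ^ (i - 1) ≤ 1 := pow_le_one₀ hx0 hx1
              have hp0 : (0:ℝ) ≤ (1 - Real.exp (-t)) ^ (i - 1) := pow_nonneg hx0 _
              have hmain : (i : ℝ) * ((1 - Real.exp (-t)) ^ (i - 1) * Real.exp (-t)) ≤ (i:ℝ) * 1 := by
                apply mul_le_mul_of_nonneg_left _ (Nat.cast_nonneg i)
                calc (1 - Real.exp (-t)) ^ (i - 1) * Real.exp (-t) ≤ 1 * 1 :=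
                      mul_le_mul hp1 ha1 (le_of_lt ha0) zero_le_one
                  _ = 1 := mul_one 1
              calc (i : ℝ) * (1 - Real.exp (-t)) ^ (i - 1) * Real.exp (-t)
                  = (i : ℝ) * ((1 - Real.exp (-t)) ^ (i - 1) * Real.exp (-t)) := by ring
                _ ≤ (i:ℝ) * 1 := hmain
                _ = (i : ℝ) := by ring
                _ ≤ (n : ℝ) := by exact_mod_cast hi'
          _ ≤ n^2 := by
              rw [Finset.sum_const, nsmul_eq_mul]
              have : (Finset.Icc 1 n).card ≤ n := by simp
              calc ((Finset.Icc 1 n).card : ℝ) * n ≤ (n:ℝ) * n := by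
                    apply mul_le_mul_of_nonneg_right _ (by positivity)
                    exact_mod_cast this
                _ = (n:ℝ)^2 := by ring
      have hsum0 : (0:ℝ) ≤ ∑ i ∈ Finset.Icc 1 n, (i : ℝ) * (1 - Real.exp (-t)) ^ (i - 1) * Real.exp (-t) := by
        apply Finset.sum_nonneg
        intro i _
        have hp0 : (0:ℝ) ≤ (1 - Real.exp (-t)) ^ (i - 1) := pow_nonneg hx0 _
        have := (Real.exp_pos (-t)).le
        positivity
      have hexple : Real.exp (-(t - sphi n t)) ≤ Real.exp (n : ℝ) * Real.exp (-1 * t) := by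
        rw [← Real.exp_add]
        apply Real.exp_le_exp.mpr
        have := sphi_le n t ht'
        linarith
      rw [hf']
      rw [Real.norm_eq_abs, abs_of_nonneg (mul_nonneg hsum0 (Real.exp_pos _).le)]
      calc _ ≤ (n:ℝ)^2 * (Real.exp (n:ℝ) * Real.exp (-1 * t)) := by
            apply mul_le_mul hsumle hexple (by positivity) (by positivity)
        _ = (n:ℝ)^2 * Real.exp (n:ℝ) * Real.exp (-1 * t) := by ring
  -- limit of F
  have hlim : Filter.Tendsto F Filter.atTop (nhds (Real.exp H)) := by
    have h1 : Filter.Tendsto (fun t => Real.exp (sphi n t)) Filter.atTop (nhds (Real.exp H)) :=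
      (Real.continuous_exp.tendsto H).comp (tendsto_sphi n)
    have h2 : Filter.Tendsto (fun t : ℝ => sphi n t - t) Filter.atTop Filter.atBot := by
      apply Filter.Tendsto.add_atBot (tendsto_sphi n)
      exact Filter.tendsto_neg_atTop_atBot
    have h3 : Filter.Tendsto (fun t => (n:ℝ) * Real.exp (sphi n t - t)) Filter.atTop (nhds 0) := by
      have := Real.tendsto_exp_atBot.comp h2
      simpa using this.const_mul (n:ℝ)
    have := h1.add h3
    simpa using this
  have key := MeasureTheory.integral_Ioi_of_hasDerivAt_of_tendsto'
    (f := F) (f' := f') (a := 0) (fun t _ => hderiv t) hint hlim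
  have hF0 : F 0 = m := by
    rw [hF]
    simp only [sphi_zero, Real.exp_zero, sub_zero, mul_one]
    rw [hmn]; ring
  rw [hre, key, hF0, hHcast]
  ring

/-- The Campbell-formula computation of the mean running time:
`∫_0^∞ (∑_{i=1}^{m-1} i λ_i(t)) e^{-∫_0^t λ_m(s)ds} dt + m = e^{H_{m-1}}`,
where `λ_i(t) = (1-e^{-t})^{i-1} e^{-t}` and `λ_m(t) = (1-e^{-t})^{m-1}`. -/
theorem stmt10 (m : ℕ) (hm : 2 ≤ m) :
    (∫ t in Set.Ioi (0 : ℝ),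
        (∑ i ∈ Finset.Icc 1 (m - 1), (i : ℝ) * (1 - Real.exp (-t)) ^ (i - 1) * Real.exp (-t)) *
          Real.exp (-(∫ s in (0 : ℝ)..t, (1 - Real.exp (-s)) ^ (m - 1)))) + (m : ℝ) =
      Real.exp ((harmonic (m - 1) : ℚ) : ℝ) := by
  exact stmt10' m hm
end

section
/- Let $m \geq 2$ and define $\lambda_i(t) := (1-e^{-t})^{i-1}e^{-t}$. Then $\int_0^\infty e^t\,[1-(1-e^{-t})^{m-1}]\, e^{-\int_0^t (1-e^{-s})^{m-1}\,ds}\,dt = e^{H_{m-1}} - 1$, where $H_{m-1}$ is the $(m-1)$-th harmonic number. -/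
open MeasureTheory Filter Real

/-- derivative of the base function `s ↦ 1 - e^{-s}`. -/
lemma base_hasDerivAt (s : ℝ) :
    HasDerivAt (fun s : ℝ => 1 - Real.exp (-s)) (Real.exp (-s)) s := by
  have h1 : HasDerivAt (fun s : ℝ => Real.exp (-s)) (-Real.exp (-s)) s := by
    simpa [Function.comp_def] using (Real.hasDerivAt_exp (-s)).comp s ((hasDerivAt_id s).neg)
  simpa [Pi.sub_def] using (hasDerivAt_const s (1 : ℝ)).sub h1

lemma prim_hasDerivAt (k : ℕ) (s : ℝ) :
    HasDerivAt (fun s : ℝ => (1 - Real.exp (-s)) ^ (k + 1) * ((k : ℝ) + 1)⁻¹)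
      (Real.exp (-s) * (1 - Real.exp (-s)) ^ k) s := by
  have h : HasDerivAt (fun s : ℝ => (1 - Real.exp (-s)) ^ (k + 1) * ((k : ℝ) + 1)⁻¹)
      (((k + 1 : ℕ) : ℝ) * (1 - Real.exp (-s)) ^ (k + 1 - 1) * Real.exp (-s) * ((k : ℝ) + 1)⁻¹) s :=
    ((base_hasDerivAt s).pow (k + 1)).mul_const ((k : ℝ) + 1)⁻¹
  convert h using 1
  have hk : ((k : ℝ) + 1) ≠ 0 := by positivity
  push_cast
  field_simp

lemma prim_tendsto (k : ℕ) :
    Tendsto (fun s : ℝ => (1 - Real.exp (-s)) ^ (k + 1) * ((k : ℝ) + 1)⁻¹) atTop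
      (nhds (((k : ℝ) + 1)⁻¹)) := by
  have h0 : Tendsto (fun s : ℝ => Real.exp (-s)) atTop (nhds 0) := by
    simpa using Real.tendsto_exp_neg_atTop_nhds_zero
  have h1 : Tendsto (fun s : ℝ => (1 - Real.exp (-s)) ^ (k + 1)) atTop (nhds 1) := by
    have := ((tendsto_const_nhds (x := (1:ℝ))).sub h0).pow (k + 1)
    simpa using this
  simpa using h1.mul_const (((k : ℝ) + 1)⁻¹)

lemma term_nonneg (k : ℕ) {s : ℝ} (hs : 0 < s) :
    0 ≤ Real.exp (-s) * (1 - Real.exp (-s)) ^ k := by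
  have h1 : Real.exp (-s) ≤ 1 := by
    rw [Real.exp_le_one_iff]; linarith
  have h2 : 0 ≤ 1 - Real.exp (-s) := by linarith
  exact mul_nonneg (Real.exp_pos _).le (pow_nonneg h2 k)

lemma term_integral (k : ℕ) :
    ∫ s in Set.Ioi (0 : ℝ), Real.exp (-s) * (1 - Real.exp (-s)) ^ k = ((k : ℝ) + 1)⁻¹ := by
  have := integral_Ioi_of_hasDerivAt_of_nonneg'
    (fun x _ => prim_hasDerivAt k x) (fun x hx => term_nonneg k hx) (prim_tendsto k)
  simpa using this

lemma term_integrable (k : ℕ) :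
    IntegrableOn (fun s : ℝ => Real.exp (-s) * (1 - Real.exp (-s)) ^ k) (Set.Ioi (0 : ℝ)) :=
  integrableOn_Ioi_deriv_of_nonneg'
    (fun x _ => prim_hasDerivAt k x) (fun x hx => term_nonneg k hx) (prim_tendsto k)

lemma geom_identity (n : ℕ) (s : ℝ) :
    1 - (1 - Real.exp (-s)) ^ n
      = ∑ k ∈ Finset.range n, Real.exp (-s) * (1 - Real.exp (-s)) ^ k := by
  have := geom_sum_mul (1 - Real.exp (-s)) n
  rw [Finset.sum_mul] at this
  have h2 : ∀ k ∈ Finset.range n,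
      Real.exp (-s) * (1 - Real.exp (-s)) ^ k
        = -((1 - Real.exp (-s)) ^ k * ((1 - Real.exp (-s)) - 1)) := by
    intro k _; ring
  rw [Finset.sum_congr rfl h2, Finset.sum_neg_distrib, this]
  ring

lemma h_integrable (n : ℕ) :
    IntegrableOn (fun s : ℝ => 1 - (1 - Real.exp (-s)) ^ n) (Set.Ioi (0 : ℝ)) := by
  have : IntegrableOn
      (fun s : ℝ => ∑ k ∈ Finset.range n, Real.exp (-s) * (1 - Real.exp (-s)) ^ k)
      (Set.Ioi (0 : ℝ)) :=
    integrable_finset_sum _ (fun k _ => term_integrable k)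
  exact this.congr_fun (fun s _ => (geom_identity n s).symm) measurableSet_Ioi

lemma h_integral (n : ℕ) :
    ∫ s in Set.Ioi (0 : ℝ), (1 - (1 - Real.exp (-s)) ^ n)
      = ((harmonic n : ℚ) : ℝ) := by
  have h1 : ∫ s in Set.Ioi (0 : ℝ), (1 - (1 - Real.exp (-s)) ^ n)
      = ∫ s in Set.Ioi (0 : ℝ),
          ∑ k ∈ Finset.range n, Real.exp (-s) * (1 - Real.exp (-s)) ^ k :=
    setIntegral_congr_fun measurableSet_Ioi (fun s _ => geom_identity n s)
  rw [h1, integral_finset_sum _ (fun k _ => term_integrable k)]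
  rw [Finset.sum_congr rfl (fun k _ => term_integral k)]
  unfold harmonic
  push_cast
  rfl

/-- The key integral `I₁`:
`∫_0^∞ e^t [1-(1-e^{-t})^{m-1}] e^{-∫_0^t (1-e^{-s})^{m-1} ds} dt = e^{H_{m-1}} - 1`. -/
theorem stmt12 (m : ℕ) (hm : 2 ≤ m) :
    ∫ t in Set.Ioi (0 : ℝ),
        Real.exp t * (1 - (1 - Real.exp (-t)) ^ (m - 1)) *
          Real.exp (-(∫ s in (0 : ℝ)..t, (1 - Real.exp (-s)) ^ (m - 1))) =
      Real.exp ((harmonic (m - 1) : ℚ) : ℝ) - 1 := by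
  set n := m - 1 with hn
  set G : ℝ → ℝ := fun t => ∫ s in (0 : ℝ)..t, (1 - Real.exp (-s)) ^ n with hG
  set f : ℝ → ℝ := fun t => Real.exp (t - G t) with hf
  have hcont : Continuous fun s : ℝ => (1 - Real.exp (-s)) ^ n := by
    exact ((continuous_const.sub (Real.continuous_exp.comp continuous_neg)).pow n)
  have hGderiv : ∀ t : ℝ, HasDerivAt G ((1 - Real.exp (-t)) ^ n) t := fun t =>
    (hcont.integral_hasStrictDerivAt 0 t).hasDerivAt
  have hfderiv : ∀ t : ℝ,
      HasDerivAt f ((1 - (1 - Real.exp (-t)) ^ n) * Real.exp (t - G t)) t := by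
    intro t
    have hinner : HasDerivAt (fun t => t - G t) (1 - (1 - Real.exp (-t)) ^ n) t :=
      (hasDerivAt_id t).sub (hGderiv t)
    simpa [mul_comm, Function.comp_def] using (Real.hasDerivAt_exp (t - G t)).comp t hinner
  -- f tendsto exp(H_n) at top
  have hFG : ∀ t : ℝ, t - G t = ∫ s in (0:ℝ)..t, (1 - (1 - Real.exp (-s)) ^ n) := by
    intro t
    have hi1 : IntervalIntegrable (fun _ : ℝ => (1:ℝ)) volume 0 t :=
      intervalIntegrable_const
    have hi2 : IntervalIntegrable (fun s : ℝ => (1 - Real.exp (-s)) ^ n) volume 0 t :=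
      hcont.intervalIntegrable 0 t
    rw [intervalIntegral.integral_sub hi1 hi2]
    simp [hG]
  have hFtend : Tendsto (fun t => t - G t) atTop (nhds ((harmonic n : ℚ) : ℝ)) := by
    rw [show ∀ f, Tendsto f atTop (nhds ((harmonic n : ℚ) : ℝ)) ↔ Tendsto f atTop
      (nhds ((harmonic n : ℚ) : ℝ)) from fun _ => Iff.rfl]
    have := intervalIntegral_tendsto_integral_Ioi 0 (h_integrable n) tendsto_id
    rw [h_integral n] at this
    exact Tendsto.congr (fun t => (hFG t).symm) this
  have hftend : Tendsto f atTop (nhds (Real.exp ((harmonic n : ℚ) : ℝ))) :=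
    (Real.continuous_exp.continuousAt).tendsto.comp hFtend
  have hf0 : f 0 = 1 := by simp [hf, hG]
  have hnonneg : ∀ t ∈ Set.Ioi (0:ℝ),
      0 ≤ (1 - (1 - Real.exp (-t)) ^ n) * Real.exp (t - G t) := by
    intro t ht
    apply mul_nonneg _ (Real.exp_pos _).le
    have h1 : 0 ≤ 1 - Real.exp (-t) := by
      have : Real.exp (-t) ≤ 1 := by rw [Real.exp_le_one_iff]; linarith [ht.out]
      linarith
    have h2 : 1 - Real.exp (-t) ≤ 1 := by linarith [Real.exp_pos (-t)]
    have := pow_le_one₀ h1 h2 (n := n)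
    linarith
  have key := integral_Ioi_of_hasDerivAt_of_nonneg' (fun x _ => hfderiv x) hnonneg hftend
  rw [hf0] at key
  rw [← key]
  apply setIntegral_congr_fun measurableSet_Ioi
  intro t _
  have h : Real.exp (t - G t)
      = Real.exp t * Real.exp (-(∫ s in (0:ℝ)..t, (1 - Real.exp (-s)) ^ n)) := by
    rw [← Real.exp_add]
    congr 1
    try simp [hG, sub_eq_add_neg]
  dsimp only
  rw [h]
  ring
end

section
/- Let $m \geq 2$, let $T$ be the first arrival time of an inhomogeneous Poisson process with intensity $\lambda_m(t) = (1-e^{-t})^{m-1}$, and for $1 \leq i \leq m-1$ let $N^{(i)}$ be independent inhomogeneous Poisson processes with intensities $\lambda_i(t) = (1-e^{-t})^{i-1}e^{-t}$, all independent of $T$'s process. Define $\tilde{\mathcal S} := m + \sum_{i=1}^{m-1} i\, N^{(i)}_T$. Then $\mathbb{E}(\tilde{\mathcal S}) = e^{H_{m-1}}$. -/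
open MeasureTheory ProbabilityTheory

open Finset Real
open MeasureTheory ProbabilityTheory Finset Real

lemma aux_geom (n : ℕ) (u : ℝ) : (∑ j ∈ range n, u ^ j) * (1 - u) = 1 - u ^ n := by
  linear_combination -geom_sum_mul u n

lemma aux_keyalg (n : ℕ) (u : ℝ) :
    (∑ i ∈ range n, ((i : ℝ) + 1) * u ^ i) * (1 - u) ^ 2
      = 1 - ((n : ℝ) + 1) * u ^ n + (n : ℝ) * u ^ (n + 1) := by
  induction n with
  | zero => simp
  | succ n ih =>
    rw [Finset.sum_range_succ, add_mul, ih]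
    push_cast
    ring

lemma aux_bracket (n : ℕ) (u : ℝ) (hu : u ≠ 1) :
    -(n : ℝ) + ((n : ℝ) + 1 - n * u) * (∑ j ∈ range n, u ^ j)
      = (∑ i ∈ range n, ((i : ℝ) + 1) * u ^ i) * (1 - u) := by
  have h1 : (1 : ℝ) - u ≠ 0 := sub_ne_zero.mpr (Ne.symm hu)
  apply mul_right_cancel₀ h1
  have g := aux_geom n u
  have k := aux_keyalg n u
  linear_combination ((n : ℝ) + 1 - n * u) * g - k

lemma aux_Icc_to_range {M : Type*} [AddCommMonoid M] (n : ℕ) (f : ℕ → M) :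
    ∑ i ∈ Icc 1 n, f i = ∑ i ∈ range n, f (i + 1) := by
  rw [← Finset.Ico_add_one_right_eq_Icc, Finset.sum_Ico_eq_sum_range]
  simp [add_comm]

lemma hasDerivAt_u (x : ℝ) : HasDerivAt (fun t => 1 - Real.exp (-t)) (Real.exp (-x)) x := by
  have h := (Real.hasDerivAt_exp (-x)).comp x (hasDerivAt_neg x)
  simpa using (hasDerivAt_const x (1 : ℝ)).fun_sub h

lemma aux_pow_deriv (i : ℕ) (hi : 1 ≤ i) (x : ℝ) :
    HasDerivAt (fun s => (1 - Real.exp (-s)) ^ i / i)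
      ((1 - Real.exp (-x)) ^ (i - 1) * Real.exp (-x)) x := by
  have h := ((hasDerivAt_u x).pow i).div_const (i : ℝ)
  refine h.congr_deriv ?_; symm
  have : (i : ℝ) ≠ 0 := Nat.cast_ne_zero.mpr (by omega)
  field_simp

lemma aux_intlam (i : ℕ) (hi : 1 ≤ i) (t : ℝ) :
    ∫ s in (0:ℝ)..t, (1 - Real.exp (-s)) ^ (i - 1) * Real.exp (-s)
      = (1 - Real.exp (-t)) ^ i / i := by
  have hint : IntervalIntegrable (fun s => (1 - Real.exp (-s)) ^ (i - 1) * Real.exp (-s))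
      MeasureTheory.volume 0 t := (Continuous.intervalIntegrable (by fun_prop) _ _)
  rw [intervalIntegral.integral_eq_sub_of_hasDerivAt (fun x _ => aux_pow_deriv i hi x) hint]
  simp [zero_pow (by omega : i ≠ 0)]

lemma aux_sumP_deriv (n : ℕ) (x : ℝ) :
    HasDerivAt (fun s => ∑ j ∈ Icc 1 n, (1 - Real.exp (-s)) ^ j / j)
      (∑ j ∈ Icc 1 n, (1 - Real.exp (-x)) ^ (j - 1) * Real.exp (-x)) x := by
  exact HasDerivAt.fun_sum (fun j hj => aux_pow_deriv j (Finset.mem_Icc.mp hj).1 x)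

lemma aux_intlam_m (n : ℕ) (t : ℝ) :
    ∫ s in (0:ℝ)..t, (1 - Real.exp (-s)) ^ n
      = t - ∑ j ∈ Icc 1 n, (1 - Real.exp (-t)) ^ j / j := by
  have key : ∀ x : ℝ, HasDerivAt
      (fun s => s - ∑ j ∈ Icc 1 n, (1 - Real.exp (-s)) ^ j / j)
      ((1 - Real.exp (-x)) ^ n) x := by
    intro x
    have h := (hasDerivAt_id' x).fun_sub (aux_sumP_deriv n x)
    refine h.congr_deriv ?_; symm
    set u := 1 - Real.exp (-x) with hu
    have he : Real.exp (-x) = 1 - u := by rw [hu]; ring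
    have hsum : ∑ j ∈ Icc 1 n, u ^ (j - 1) * Real.exp (-x)
        = (∑ j ∈ range n, u ^ j) * (1 - u) := by
      rw [aux_Icc_to_range]
      simp only [Nat.add_sub_cancel]
      rw [← Finset.sum_mul, he]
    rw [hsum, aux_geom]
    ring
  have hint : IntervalIntegrable (fun s => (1 - Real.exp (-s)) ^ n)
      MeasureTheory.volume 0 t := (Continuous.intervalIntegrable (by fun_prop) _ _)
  rw [intervalIntegral.integral_eq_sub_of_hasDerivAt (fun x _ => key x) hint]
  have : ∀ j ∈ Icc 1 n, (1 - Real.exp (-(0:ℝ))) ^ j / (j:ℝ) = 0 := by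
    intro j hj
    have : 1 ≤ j := (Finset.mem_Icc.mp hj).1
    simp [zero_pow (by omega : j ≠ 0)]
  rw [Finset.sum_congr rfl this]
  simp

noncomputable def auxF (n : ℕ) : ℝ → ℝ := fun s =>
  ((n : ℝ) + 1 - n * (1 - Real.exp (-s))) *
    Real.exp (∑ j ∈ Icc 1 n, (1 - Real.exp (-s)) ^ j / j)

lemma auxF_deriv (n : ℕ) (x : ℝ) :
    HasDerivAt (auxF n)
      ((∑ i ∈ Icc 1 n, (i : ℝ) * (1 - Real.exp (-x)) ^ (i - 1) * Real.exp (-x)) *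
        Real.exp (-(x - ∑ j ∈ Icc 1 n, (1 - Real.exp (-x)) ^ j / j))) x := by
  have c1 : HasDerivAt (fun s => (n : ℝ) + 1 - n * (1 - Real.exp (-s)))
      (-((n : ℝ) * Real.exp (-x))) x := by
    simpa using (hasDerivAt_const x ((n : ℝ) + 1)).fun_sub ((hasDerivAt_u x).const_mul (n : ℝ))
  have c2 := aux_sumP_deriv n x
  have c3 := c2.exp
  have h := c1.mul c3
  refine h.congr_deriv ?_; symm
  set u := 1 - Real.exp (-x) with hu
  set P := ∑ j ∈ Icc 1 n, u ^ j / (j : ℝ) with hP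
  have he : Real.exp (-x) = 1 - u := by rw [hu]; ring
  have hune : u ≠ 1 := by
    intro h'
    have := Real.exp_pos (-x)
    rw [he, h'] at this; simp at this
  have hexp : Real.exp (-(x - P)) = Real.exp P * Real.exp (-x) := by
    rw [neg_sub, Real.exp_sub, Real.exp_neg, div_eq_mul_inv]
  have hS1 : ∑ j ∈ Icc 1 n, u ^ (j - 1) * Real.exp (-x)
      = (∑ j ∈ range n, u ^ j) * Real.exp (-x) := by
    rw [aux_Icc_to_range]
    simp only [Nat.add_sub_cancel]
    rw [← Finset.sum_mul]
  have hS2 : ∑ i ∈ Icc 1 n, (i : ℝ) * u ^ (i - 1) * Real.exp (-x)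
      = (∑ i ∈ range n, ((i : ℝ) + 1) * u ^ i) * Real.exp (-x) := by
    rw [aux_Icc_to_range]
    simp only [Nat.add_sub_cancel]
    rw [← Finset.sum_mul]
    push_cast
    ring_nf
    rw [mul_comm]; exact congrArg _ (Finset.sum_congr rfl fun _ _ => by ring)
  rw [hexp, hS2, hS1]
  have B := aux_bracket n u hune
  have he2 : (1 : ℝ) - u = Real.exp (-x) := he.symm
  calc (∑ i ∈ range n, ((i : ℝ) + 1) * u ^ i) * Real.exp (-x) * (Real.exp P * Real.exp (-x))
      = ((∑ i ∈ range n, ((i : ℝ) + 1) * u ^ i) * (1 - u)) * (Real.exp (-x) * Real.exp P) := by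
        rw [← he2]; ring
    _ = (-(n : ℝ) + ((n : ℝ) + 1 - n * u) * (∑ j ∈ range n, u ^ j)) *
          (Real.exp (-x) * Real.exp P) := by rw [B]
    _ = -((n : ℝ) * Real.exp (-x)) * Real.exp P +
          ((n : ℝ) + 1 - n * u) * (Real.exp P * ((∑ j ∈ range n, u ^ j) * Real.exp (-x))) := by
        ring

lemma aux_u_mem (x : ℝ) (hx : 0 ≤ x) :
    0 ≤ 1 - Real.exp (-x) ∧ 1 - Real.exp (-x) ≤ 1 := by
  constructor
  · have : Real.exp (-x) ≤ 1 := Real.exp_le_one_iff.mpr (by linarith)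
    linarith
  · have := Real.exp_pos (-x); linarith

lemma aux_integrand_nonneg (n : ℕ) (x : ℝ) (hx : 0 ≤ x) :
    0 ≤ (∑ i ∈ Icc 1 n, (i : ℝ) * (1 - Real.exp (-x)) ^ (i - 1) * Real.exp (-x)) *
        Real.exp (-(x - ∑ j ∈ Icc 1 n, (1 - Real.exp (-x)) ^ j / j)) := by
  apply mul_nonneg _ (Real.exp_nonneg _)
  apply Finset.sum_nonneg
  intro i _
  have := (aux_u_mem x hx).1
  positivity

lemma auxF_tendsto (n : ℕ) :
    Filter.Tendsto (auxF n) Filter.atTop (nhds (Real.exp (∑ j ∈ Icc 1 n, (j : ℝ)⁻¹))) := by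
  have hu : Filter.Tendsto (fun s : ℝ => 1 - Real.exp (-s)) Filter.atTop (nhds 1) := by
    have := (tendsto_const_nhds (x := (1:ℝ))).sub Real.tendsto_exp_neg_atTop_nhds_zero
    simpa using this
  have hG : Continuous (fun v : ℝ =>
      ((n : ℝ) + 1 - n * v) * Real.exp (∑ j ∈ Icc 1 n, v ^ j / j)) := by
    fun_prop
  have := (hG.tendsto 1).comp hu
  convert this using 2
  exacts [rfl, by simp]

lemma aux_calc (n : ℕ) :
    MeasureTheory.IntegrableOn (fun s =>
      (∑ i ∈ Icc 1 n, (i : ℝ) * (1 - Real.exp (-s)) ^ (i - 1) * Real.exp (-s)) *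
        Real.exp (-(s - ∑ j ∈ Icc 1 n, (1 - Real.exp (-s)) ^ j / j))) (Set.Ioi 0)
        MeasureTheory.volume ∧
    ∫ s in Set.Ioi (0:ℝ),
      (∑ i ∈ Icc 1 n, (i : ℝ) * (1 - Real.exp (-s)) ^ (i - 1) * Real.exp (-s)) *
        Real.exp (-(s - ∑ j ∈ Icc 1 n, (1 - Real.exp (-s)) ^ j / j))
      = Real.exp (∑ j ∈ Icc 1 n, (j : ℝ)⁻¹) - ((n : ℝ) + 1) := by
  have hcont : ContinuousWithinAt (auxF n) (Set.Ici 0) 0 :=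
    (auxF_deriv n 0).continuousAt.continuousWithinAt
  have hderiv : ∀ x ∈ Set.Ioi (0:ℝ), HasDerivAt (auxF n) _ x := fun x _ => auxF_deriv n x
  have hpos : ∀ x ∈ Set.Ioi (0:ℝ), 0 ≤
      (∑ i ∈ Icc 1 n, (i : ℝ) * (1 - Real.exp (-x)) ^ (i - 1) * Real.exp (-x)) *
        Real.exp (-(x - ∑ j ∈ Icc 1 n, (1 - Real.exp (-x)) ^ j / j)) :=
    fun x hx => aux_integrand_nonneg n x (le_of_lt hx)
  have hF0 : auxF n 0 = (n : ℝ) + 1 := by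
    unfold auxF
    have : ∀ j ∈ Icc 1 n, (1 - Real.exp (-(0:ℝ))) ^ j / (j : ℝ) = 0 := by
      intro j hj
      have : 1 ≤ j := (Finset.mem_Icc.mp hj).1
      simp [zero_pow (by omega : j ≠ 0)]
    rw [Finset.sum_congr rfl this]
    simp
  constructor
  · exact MeasureTheory.integrableOn_Ioi_deriv_of_nonneg hcont
      (fun x hx => auxF_deriv n x) hpos (auxF_tendsto n)
  · rw [MeasureTheory.integral_Ioi_of_hasDerivAt_of_nonneg hcont
      (fun x hx => auxF_deriv n x) hpos (auxF_tendsto n), hF0]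

lemma aux_exp_tsum (x : ℝ) : ∑' k : ℕ, x ^ k / k.factorial = Real.exp x := by
  rw [Real.exp_eq_exp_ℝ, NormedSpace.exp_eq_tsum_div]

lemma aux_poisson_real (lam : ℝ) (hlam : 0 ≤ lam) :
    ∑' k : ℕ, (k : ℝ) * (Real.exp (-lam) * lam ^ k / k.factorial) = lam := by
  have hshift : ∀ k : ℕ, ((k + 1 : ℕ) : ℝ) * (Real.exp (-lam) * lam ^ (k+1) / (k+1).factorial)
      = Real.exp (-lam) * lam * (lam ^ k / k.factorial) := by
    intro k
    rw [Nat.factorial_succ]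
    have h1 : ((k+1:ℕ).factorial : ℝ) ≠ 0 := Nat.cast_ne_zero.mpr (Nat.factorial_ne_zero _)
    have h2 : ((k:ℕ).factorial : ℝ) ≠ 0 := Nat.cast_ne_zero.mpr (Nat.factorial_ne_zero _)
    push_cast
    field_simp
    ring
  have hsum0 : Summable (fun k : ℕ => Real.exp (-lam) * lam * (lam ^ k / k.factorial)) :=
    (Real.summable_pow_div_factorial lam).mul_left _
  have hsum : Summable (fun k : ℕ => (k : ℝ) * (Real.exp (-lam) * lam ^ k / k.factorial)) := by
    rw [← summable_nat_add_iff 1]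
    refine hsum0.congr fun k => ?_
    exact_mod_cast (hshift k).symm
  rw [hsum.tsum_eq_zero_add]
  simp only [Nat.cast_zero, zero_mul, zero_add]
  have : ∑' k : ℕ, ((k + 1 : ℕ) : ℝ) * (Real.exp (-lam) * lam ^ (k+1) / (k+1).factorial)
      = Real.exp (-lam) * lam * ∑' k : ℕ, lam ^ k / k.factorial := by
    rw [← tsum_mul_left]
    exact tsum_congr hshift
  push_cast at this ⊢
  rw [this, aux_exp_tsum, Real.exp_neg]
  field_simp

lemma aux_poisson_enn (lam : ℝ) (hlam : 0 ≤ lam) :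
    ∑' k : ℕ, (k : ENNReal) * ENNReal.ofReal (Real.exp (-lam) * lam ^ k / k.factorial)
      = ENNReal.ofReal lam := by
  have hterm : ∀ k : ℕ, (k : ENNReal) * ENNReal.ofReal (Real.exp (-lam) * lam ^ k / k.factorial)
      = ENNReal.ofReal ((k : ℝ) * (Real.exp (-lam) * lam ^ k / k.factorial)) := by
    intro k
    rw [ENNReal.ofReal_mul (by positivity : (0:ℝ) ≤ (k:ℝ))]
    rw [ENNReal.ofReal_natCast]
  rw [tsum_congr hterm]
  have hnn : ∀ k : ℕ, 0 ≤ (k : ℝ) * (Real.exp (-lam) * lam ^ k / k.factorial) := by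
    intro k; positivity
  have hsum : Summable (fun k : ℕ => (k : ℝ) * (Real.exp (-lam) * lam ^ k / k.factorial)) := by
    have hshift : ∀ k : ℕ, ((k + 1 : ℕ) : ℝ) * (Real.exp (-lam) * lam ^ (k+1) / (k+1).factorial)
        = Real.exp (-lam) * lam * (lam ^ k / k.factorial) := by
      intro k
      rw [Nat.factorial_succ]
      have h2 : ((k:ℕ).factorial : ℝ) ≠ 0 := Nat.cast_ne_zero.mpr (Nat.factorial_ne_zero _)
      push_cast
      field_simp
      ring
    rw [← summable_nat_add_iff 1]
    refine ((Real.summable_pow_div_factorial lam).mul_left (Real.exp (-lam) * lam)).congr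
      fun k => ?_
    exact_mod_cast (hshift k).symm
  rw [← ENNReal.ofReal_tsum_of_nonneg hnn hsum, aux_poisson_real lam hlam]

lemma aux_squeeze {Ω : Type*} [MeasurableSpace Ω] (μ : Measure Ω) [IsProbabilityMeasure μ]
    (X : ℝ → Ω → ℕ) (hXmeas : ∀ t, Measurable (X t))
    (hXmono : ∀ ω, Monotone fun t => X t ω)
    (T : Ω → ℝ) (hT : Measurable T) (hTpos : ∀ ω, 0 ≤ T ω)
    (hindep : IndepFun (fun ω => fun t : ℝ => X t ω) T μ)
    (Λ : ℝ → ℝ) (hΛmeas : Measurable Λ)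
    (hΛ0 : ∀ t, 0 ≤ t → 0 ≤ Λ t)
    (hΛ1 : ∀ t, 0 ≤ t → Λ t ≤ 1)
    (hΛmono : ∀ a b, 0 ≤ a → a ≤ b → Λ a ≤ Λ b)
    (hΛlip : ∀ a b, 0 ≤ a → a ≤ b → Λ b ≤ Λ a + (b - a))
    (hmean : ∀ t, 0 ≤ t → ∫⁻ ω, (X t ω : ENNReal) ∂μ = ENNReal.ofReal (Λ t)) :
    AEMeasurable (fun ω => (X (T ω) ω : ENNReal)) μ ∧
      ∫⁻ ω, (X (T ω) ω : ENNReal) ∂μ = ∫⁻ ω, ENNReal.ofReal (Λ (T ω)) ∂μ := by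
  classical
  set K : ℕ → Ω → ℕ := fun n ω => ⌊T ω * 2 ^ n⌋₊ with hKdef
  have hKmeas : ∀ n, Measurable (K n) := fun n => (hT.mul_const _).nat_floor
  set Ks : ℕ → ℕ → Set Ω := fun n k => K n ⁻¹' {k} with hKsdef
  have hKsmeas : ∀ n k, MeasurableSet (Ks n k) :=
    fun n k => (hKmeas n) (measurableSet_singleton k)
  have hpow_pos : ∀ n : ℕ, (0:ℝ) < 2 ^ n := fun n => by positivity
  have hb1 : ∀ n ω, ((K n ω : ℝ)) / 2 ^ n ≤ T ω := by
    intro n ω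
    rw [div_le_iff₀ (hpow_pos n)]
    exact Nat.floor_le (mul_nonneg (hTpos ω) (hpow_pos n).le)
  have hb2 : ∀ n ω, T ω < ((K n ω : ℝ) + 1) / 2 ^ n := by
    intro n ω
    rw [lt_div_iff₀ (hpow_pos n)]
    show T ω * 2 ^ n < (⌊T ω * 2 ^ n⌋₊ : ℝ) + 1
    exact Nat.lt_floor_add_one (T ω * 2 ^ n)
  -- partition representation of any function
  have hrepf : ∀ (n : ℕ) (f : Ω → ENNReal) (ω : Ω), f ω = ∑' k, (Ks n k).indicator f ω := by
    intro n f ω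
    rw [tsum_eq_single (K n ω)]
    · exact (Set.indicator_of_mem (show ω ∈ Ks n (K n ω) from rfl) f).symm
    · intro k hk
      exact Set.indicator_of_notMem (fun h => hk (Set.mem_preimage.mp h).symm) f
  -- per-piece indicator equals fixed-time indicator
  have hcongr : ∀ (n k : ℕ) (F : ℕ → ℝ),
      (Ks n k).indicator (fun ω => (X (F (K n ω)) ω : ENNReal))
        = (Ks n k).indicator (fun ω => (X (F k) ω : ENNReal)) := by
    intro n k F
    apply Set.indicator_congr
    intro ω hω
    show (X (F (K n ω)) ω : ENNReal) = (X (F k) ω : ENNReal)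
    rw [show K n ω = k from hω]
  -- independence piece
  have hpiece : ∀ (n k : ℕ) (t : ℝ), 0 ≤ t →
      ∫⁻ ω, (Ks n k).indicator (fun ω' => (X t ω' : ENNReal)) ω ∂μ
        = ENNReal.ofReal (Λ t) * μ (Ks n k) := by
    intro n k t ht
    set S : Set ℝ := {r | ⌊r * 2 ^ n⌋₊ = k} with hSdef
    have hSmeas : MeasurableSet S :=
      (measurable_id.mul_const ((2:ℝ) ^ n)).nat_floor (measurableSet_singleton k)
    have hφm : Measurable (fun x : ℝ → ℕ => (x t : ENNReal)) :=
      measurable_from_top.comp (measurable_pi_apply t)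
    have hψm : Measurable (fun r : ℝ => S.indicator (1 : ℝ → ENNReal) r) :=
      measurable_const.indicator hSmeas
    have hi : IndepFun (fun ω => (X t ω : ENNReal))
        (fun ω => S.indicator (1 : ℝ → ENNReal) (T ω)) μ := hindep.comp hφm hψm
    have hKS : Ks n k = T ⁻¹' S := by
      ext ω; simp [hKsdef, hKdef, hSdef]
    have heq : (Ks n k).indicator (fun ω' => (X t ω' : ENNReal))
        = (fun ω => (X t ω : ENNReal)) * (fun ω => S.indicator (1 : ℝ → ENNReal) (T ω)) := by
      funext ω
      by_cases h : ω ∈ Ks n k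
      · have hts : T ω ∈ S := by rw [hKS] at h; exact h
        rw [Set.indicator_of_mem h, Pi.mul_apply, Set.indicator_of_mem hts]
        simp
      · have hts : T ω ∉ S := fun hc => h (by rw [hKS]; exact hc)
        rw [Set.indicator_of_notMem h, Pi.mul_apply, Set.indicator_of_notMem hts]
        simp
    rw [heq, lintegral_mul_eq_lintegral_mul_lintegral_of_indepFun
      (show Measurable (fun ω => (X t ω : ENNReal)) from measurable_from_top.comp (hXmeas t))
      (show Measurable (fun ω => S.indicator (1 : ℝ → ENNReal) (T ω)) from hψm.comp hT)
      hi, hmean t ht]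
    congr 1
    have heq2 : (fun ω => S.indicator (1 : ℝ → ENNReal) (T ω))
        = (T ⁻¹' S).indicator (1 : Ω → ENNReal) := by
      funext ω
      by_cases h : T ω ∈ S
      · rw [Set.indicator_of_mem h, Set.indicator_of_mem (Set.mem_preimage.mpr h)]
        rfl
      · rw [Set.indicator_of_notMem h]
        exact (Set.indicator_of_notMem (fun hc : ω ∈ T ⁻¹' S => h hc) 1).symm
    rw [heq2, lintegral_indicator_one (hT hSmeas), hKS]
  -- the dyadic approximants
  set g : ℕ → Ω → ENNReal := fun n ω => (X ((K n ω : ℝ) / 2 ^ n) ω : ENNReal) with hgdef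
  set G : ℕ → Ω → ENNReal := fun n ω => (X (((K n ω : ℝ) + 1) / 2 ^ n) ω : ENNReal) with hGdef
  have hpiece_meas : ∀ (n k : ℕ) (t : ℝ),
      Measurable ((Ks n k).indicator (fun ω => (X t ω : ENNReal))) :=
    fun n k t => (measurable_from_top.comp (hXmeas t)).indicator (hKsmeas n k)
  have hgrep : ∀ n, g n = fun ω =>
      ∑' k, (Ks n k).indicator (fun ω' => (X ((k : ℝ) / 2 ^ n) ω' : ENNReal)) ω := by
    intro n
    funext ω
    refine (hrepf n (fun ω => (X (((K n ω : ℕ) : ℝ) / 2 ^ n) ω : ENNReal)) ω).trans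
      (tsum_congr fun k => ?_)
    exact congrFun (hcongr n k (fun k => (k : ℝ) / 2 ^ n)) ω
  have hGrep : ∀ n, G n = fun ω =>
      ∑' k, (Ks n k).indicator (fun ω' => (X (((k : ℝ) + 1) / 2 ^ n) ω' : ENNReal)) ω := by
    intro n
    funext ω
    refine (hrepf n (fun ω => (X ((((K n ω : ℕ) : ℝ) + 1) / 2 ^ n) ω : ENNReal)) ω).trans
      (tsum_congr fun k => ?_)
    exact congrFun (hcongr n k (fun k => ((k : ℝ) + 1) / 2 ^ n)) ω
  have hgmeas : ∀ n, Measurable (g n) := by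
    intro n; rw [hgrep n]
    exact Measurable.ennreal_tsum fun k => hpiece_meas n k _
  have hGmeas : ∀ n, Measurable (G n) := by
    intro n; rw [hGrep n]
    exact Measurable.ennreal_tsum fun k => hpiece_meas n k _
  have hgrid0 : ∀ (n k : ℕ), (0:ℝ) ≤ (k : ℝ) / 2 ^ n := fun n k => by positivity
  have hgrid0' : ∀ (n k : ℕ), (0:ℝ) ≤ ((k : ℝ) + 1) / 2 ^ n := fun n k => by positivity
  have hg_int : ∀ n, ∫⁻ ω, g n ω ∂μ
      = ∑' k : ℕ, ENNReal.ofReal (Λ ((k : ℝ) / 2 ^ n)) * μ (Ks n k) := by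
    intro n
    rw [hgrep n, lintegral_tsum (fun k => (hpiece_meas n k _).aemeasurable)]
    exact tsum_congr fun k => hpiece n k _ (hgrid0 n k)
  have hG_int : ∀ n, ∫⁻ ω, G n ω ∂μ
      = ∑' k : ℕ, ENNReal.ofReal (Λ (((k : ℝ) + 1) / 2 ^ n)) * μ (Ks n k) := by
    intro n
    rw [hGrep n, lintegral_tsum (fun k => (hpiece_meas n k _).aemeasurable)]
    exact tsum_congr fun k => hpiece n k _ (hgrid0' n k)
  -- decomposition of L
  have hΛT_meas : Measurable (fun ω => ENNReal.ofReal (Λ (T ω))) :=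
    ENNReal.measurable_ofReal.comp (hΛmeas.comp hT)
  set L : ENNReal := ∫⁻ ω, ENNReal.ofReal (Λ (T ω)) ∂μ with hLdef
  have hLdecomp : ∀ n, L = ∑' k,
      ∫⁻ ω, (Ks n k).indicator (fun ω' => ENNReal.ofReal (Λ (T ω'))) ω ∂μ := by
    intro n
    rw [hLdef, lintegral_congr (fun ω => hrepf n (fun ω' => ENNReal.ofReal (Λ (T ω'))) ω),
      lintegral_tsum (fun k => (hΛT_meas.indicator (hKsmeas n k)).aemeasurable)]
  have hLpieceL : ∀ (n k : ℕ), ENNReal.ofReal (Λ ((k : ℝ) / 2 ^ n)) * μ (Ks n k)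
      ≤ ∫⁻ ω, (Ks n k).indicator (fun ω' => ENNReal.ofReal (Λ (T ω'))) ω ∂μ := by
    intro n k
    rw [← lintegral_indicator_const (hKsmeas n k)]
    apply lintegral_mono
    intro ω
    by_cases h : ω ∈ Ks n k
    · rw [Set.indicator_of_mem h, Set.indicator_of_mem h]
      apply ENNReal.ofReal_le_ofReal
      apply hΛmono _ _ (hgrid0 n k)
      have := hb1 n ω
      rwa [show K n ω = k from h] at this
    · rw [Set.indicator_of_notMem h, Set.indicator_of_notMem h]
  have hLpieceU : ∀ (n k : ℕ),
      ∫⁻ ω, (Ks n k).indicator (fun ω' => ENNReal.ofReal (Λ (T ω'))) ω ∂μ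
        ≤ ENNReal.ofReal (Λ (((k : ℝ) + 1) / 2 ^ n)) * μ (Ks n k) := by
    intro n k
    rw [← lintegral_indicator_const (hKsmeas n k)]
    apply lintegral_mono
    intro ω
    by_cases h : ω ∈ Ks n k
    · rw [Set.indicator_of_mem h, Set.indicator_of_mem h]
      apply ENNReal.ofReal_le_ofReal
      apply hΛmono _ _ (hTpos ω)
      have := (hb2 n ω).le
      rwa [show K n ω = k from h] at this
    · rw [Set.indicator_of_notMem h, Set.indicator_of_notMem h]
  -- Lipschitz step
  have hstep : ∀ n k : ℕ, ENNReal.ofReal (Λ (((k : ℝ) + 1) / 2 ^ n))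
      ≤ ENNReal.ofReal (Λ ((k : ℝ) / 2 ^ n)) + ENNReal.ofReal ((2:ℝ)⁻¹ ^ n) := by
    intro n k
    have hle : (k : ℝ) / 2 ^ n ≤ ((k : ℝ) + 1) / 2 ^ n := by
      have := hpow_pos n
      rw [div_le_div_iff_of_pos_right this]
      linarith
    have hlip := hΛlip _ _ (hgrid0 n k) hle
    have hdiff : ((k : ℝ) + 1) / 2 ^ n - (k : ℝ) / 2 ^ n = (2:ℝ)⁻¹ ^ n := by
      rw [inv_pow]
      field_simp
      ring
    rw [hdiff] at hlip
    calc ENNReal.ofReal (Λ (((k : ℝ) + 1) / 2 ^ n))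
        ≤ ENNReal.ofReal (Λ ((k : ℝ) / 2 ^ n) + (2:ℝ)⁻¹ ^ n) := ENNReal.ofReal_le_ofReal hlip
      _ = _ := ENNReal.ofReal_add (hΛ0 _ (hgrid0 n k)) (by positivity)
  -- total mass of partition
  have hKs_total : ∀ n, ∑' k, μ (Ks n k) = 1 := by
    intro n
    rw [← measure_iUnion ?_ (fun k => hKsmeas n k)]
    · have : ⋃ k, Ks n k = Set.univ := by
        ext ω; simp only [Set.mem_iUnion, Set.mem_univ, iff_true]
        exact ⟨K n ω, rfl⟩
      rw [this, measure_univ]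
    · intro k k' hne
      apply Set.disjoint_left.mpr
      intro ω h1 h2
      exact hne ((Set.mem_preimage.mp h1).symm.trans (Set.mem_preimage.mp h2))
  -- the three bounds
  have h1 : ∀ n, ∫⁻ ω, g n ω ∂μ ≤ L := by
    intro n
    rw [hg_int n, hLdecomp n]
    exact ENNReal.tsum_le_tsum fun k => hLpieceL n k
  have h2 : ∀ n, L ≤ ∫⁻ ω, g n ω ∂μ + ENNReal.ofReal ((2:ℝ)⁻¹ ^ n) := by
    intro n
    rw [hLdecomp n, hg_int n]
    calc ∑' k, ∫⁻ ω, (Ks n k).indicator (fun ω' => ENNReal.ofReal (Λ (T ω'))) ω ∂μ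
        ≤ ∑' k : ℕ, (ENNReal.ofReal (Λ ((k : ℝ) / 2 ^ n)) + ENNReal.ofReal ((2:ℝ)⁻¹ ^ n))
            * μ (Ks n k) := by
          refine ENNReal.tsum_le_tsum fun k => (hLpieceU n k).trans ?_
          exact mul_le_mul_left (hstep n k) _
      _ = (∑' k : ℕ, ENNReal.ofReal (Λ ((k : ℝ) / 2 ^ n)) * μ (Ks n k))
            + ∑' k : ℕ, ENNReal.ofReal ((2:ℝ)⁻¹ ^ n) * μ (Ks n k) := by
          rw [← ENNReal.tsum_add]
          exact tsum_congr fun k => add_mul _ _ _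
      _ = (∑' k : ℕ, ENNReal.ofReal (Λ ((k : ℝ) / 2 ^ n)) * μ (Ks n k))
            + ENNReal.ofReal ((2:ℝ)⁻¹ ^ n) := by
          rw [ENNReal.tsum_mul_left, hKs_total n, mul_one]
  have h3 : ∀ n, ∫⁻ ω, G n ω ∂μ ≤ L + ENNReal.ofReal ((2:ℝ)⁻¹ ^ n) := by
    intro n
    rw [hG_int n, hLdecomp n]
    calc ∑' k : ℕ, ENNReal.ofReal (Λ (((k : ℝ) + 1) / 2 ^ n)) * μ (Ks n k)
        ≤ ∑' k : ℕ, (∫⁻ ω, (Ks n k).indicator (fun ω' => ENNReal.ofReal (Λ (T ω'))) ω ∂μ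
            + ENNReal.ofReal ((2:ℝ)⁻¹ ^ n) * μ (Ks n k)) := by
          refine ENNReal.tsum_le_tsum fun k => ?_
          calc ENNReal.ofReal (Λ (((k : ℝ) + 1) / 2 ^ n)) * μ (Ks n k)
              ≤ (ENNReal.ofReal (Λ ((k : ℝ) / 2 ^ n)) + ENNReal.ofReal ((2:ℝ)⁻¹ ^ n))
                  * μ (Ks n k) := mul_le_mul_left (hstep n k) _
            _ = ENNReal.ofReal (Λ ((k : ℝ) / 2 ^ n)) * μ (Ks n k)
                  + ENNReal.ofReal ((2:ℝ)⁻¹ ^ n) * μ (Ks n k) := add_mul _ _ _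
            _ ≤ _ := add_le_add_left (hLpieceL n k) _
      _ = (∑' k : ℕ, ∫⁻ ω, (Ks n k).indicator (fun ω' => ENNReal.ofReal (Λ (T ω'))) ω ∂μ)
            + ∑' k : ℕ, ENNReal.ofReal ((2:ℝ)⁻¹ ^ n) * μ (Ks n k) := ENNReal.tsum_add
      _ = _ := by rw [ENNReal.tsum_mul_left, hKs_total n, mul_one]
  -- finiteness of L
  have hLfin : L ≠ ⊤ := by
    have : L ≤ 1 := by
      rw [hLdef]
      calc ∫⁻ ω, ENNReal.ofReal (Λ (T ω)) ∂μ ≤ ∫⁻ _, 1 ∂μ :=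
            lintegral_mono fun ω => ENNReal.ofReal_le_one.mpr (hΛ1 _ (hTpos ω))
        _ = 1 := by simp
    exact (this.trans_lt ENNReal.one_lt_top).ne
  -- monotonicity of g
  have hgmono : Monotone g := by
    apply monotone_nat_of_le_succ
    intro n ω
    have hfloor : 2 * K n ω ≤ K (n+1) ω := by
      apply Nat.le_floor
      push_cast
      have hKe : (K n ω : ℝ) = (⌊T ω * 2 ^ n⌋₊ : ℝ) := rfl
      have hfl := Nat.floor_le (mul_nonneg (hTpos ω) (hpow_pos n).le)
      have hp : (2:ℝ) ^ (n+1) = 2 ^ n * 2 := pow_succ 2 n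
      rw [hKe, hp]
      nlinarith [hfl]
    have hdiv : (K n ω : ℝ) / 2 ^ n ≤ (K (n+1) ω : ℝ) / 2 ^ (n+1) := by
      rw [div_le_div_iff₀ (hpow_pos n) (hpow_pos (n+1))]
      have : ((2 * K n ω : ℕ) : ℝ) ≤ (K (n+1) ω : ℝ) := Nat.cast_le.mpr hfloor
      push_cast at this
      have hp : (2:ℝ) ^ (n+1) = 2 ^ n * 2 := pow_succ 2 n
      nlinarith [this, (hpow_pos n)]
    exact Nat.cast_le.mpr (hXmono ω hdiv)
  -- squeeze bounds
  have hgleX : ∀ n ω, g n ω ≤ (X (T ω) ω : ENNReal) :=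
    fun n ω => Nat.cast_le.mpr (hXmono ω (hb1 n ω))
  have hXleG : ∀ n ω, (X (T ω) ω : ENNReal) ≤ G n ω :=
    fun n ω => Nat.cast_le.mpr (hXmono ω (hb2 n ω).le)
  -- sup and inf
  set gs : Ω → ENNReal := fun ω => ⨆ n, g n ω with hgsdef
  set Gs : Ω → ENNReal := fun ω => ⨅ n, G n ω with hGsdef
  have hgs_meas : Measurable gs := Measurable.iSup hgmeas
  have hGs_meas : Measurable Gs := Measurable.iInf hGmeas
  have heps : ∀ ε : NNReal, 0 < ε → ∃ n : ℕ, ENNReal.ofReal ((2:ℝ)⁻¹ ^ n) ≤ (ε : ENNReal) := by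
    intro ε hε
    obtain ⟨n, hn⟩ := exists_pow_lt_of_lt_one (show (0:ℝ) < ε from hε) (by norm_num : (2:ℝ)⁻¹ < 1)
    exact ⟨n, (ENNReal.ofReal_le_ofReal hn.le).trans_eq ENNReal.ofReal_coe_nnreal⟩
  have hgsint : ∫⁻ ω, gs ω ∂μ = L := by
    rw [hgsdef, lintegral_iSup hgmeas hgmono]
    apply le_antisymm (iSup_le h1)
    apply ENNReal.le_of_forall_pos_le_add
    intro ε hε _
    obtain ⟨n, hn⟩ := heps ε hε
    calc L ≤ ∫⁻ ω, g n ω ∂μ + ENNReal.ofReal ((2:ℝ)⁻¹ ^ n) := h2 n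
      _ ≤ (⨆ m, ∫⁻ ω, g m ω ∂μ) + ε := add_le_add (le_iSup (fun m => ∫⁻ ω, g m ω ∂μ) n) hn
  have hgs_le : ∀ ω, gs ω ≤ (X (T ω) ω : ENNReal) := fun ω => iSup_le fun n => hgleX n ω
  have hle_Gs : ∀ ω, (X (T ω) ω : ENNReal) ≤ Gs ω := fun ω => le_iInf fun n => hXleG n ω
  have hGsint : ∫⁻ ω, Gs ω ∂μ = L := by
    apply le_antisymm
    · apply ENNReal.le_of_forall_pos_le_add
      intro ε hε _
      obtain ⟨n, hn⟩ := heps ε hε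
      calc ∫⁻ ω, Gs ω ∂μ ≤ ∫⁻ ω, G n ω ∂μ := lintegral_mono fun ω => iInf_le _ n
        _ ≤ L + ENNReal.ofReal ((2:ℝ)⁻¹ ^ n) := h3 n
        _ ≤ L + ε := add_le_add_right hn L
    · rw [← hgsint]
      exact lintegral_mono fun ω => (hgs_le ω).trans (hle_Gs ω)
  have hgs_le_Gs : ∀ ω, gs ω ≤ Gs ω := fun ω => (hgs_le ω).trans (hle_Gs ω)
  have hsub : ∫⁻ ω, (Gs ω - gs ω) ∂μ = 0 := by
    rw [lintegral_sub hgs_meas (by rw [hgsint]; exact hLfin)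
      (Filter.Eventually.of_forall hgs_le_Gs), hGsint, hgsint, tsub_self]
  have haeeq : ∀ᵐ ω ∂μ, Gs ω = gs ω := by
    have := (lintegral_eq_zero_iff (hGs_meas.sub hgs_meas)).mp hsub
    filter_upwards [this] with ω hω
    have hle : Gs ω ≤ gs ω := tsub_eq_zero_iff_le.mp hω
    exact le_antisymm hle (hgs_le_Gs ω)
  have hXeq : (fun ω => (X (T ω) ω : ENNReal)) =ᵐ[μ] gs := by
    filter_upwards [haeeq] with ω hω
    exact le_antisymm (hω ▸ hle_Gs ω) (hgs_le ω)
  refine ⟨(aemeasurable_congr hXeq).mpr hgs_meas.aemeasurable, ?_⟩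
  rw [lintegral_congr_ae hXeq, hgsint]

lemma aux_tonelli {Ω : Type*} [MeasurableSpace Ω] (μ : Measure Ω) [IsProbabilityMeasure μ]
    (T : Ω → ℝ) (hT : Measurable T) (hTpos : ∀ ω, 0 ≤ T ω)
    (w : ℝ → ℝ) (hw : Continuous w) (hw0 : ∀ s, 0 ≤ s → 0 ≤ w s)
    (ρ : ℝ → ℝ) (hρc : Continuous ρ)
    (hρ : ∀ s, 0 ≤ s → (μ {ω | s < T ω}).toReal = ρ s)
    (hInt : IntegrableOn (fun s => w s * ρ s) (Set.Ioi 0) volume) :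
    ∫ ω, (∫ s in (0:ℝ)..(T ω), w s) ∂μ = ∫ s in Set.Ioi (0:ℝ), w s * ρ s := by
  have hρ0 : ∀ s, 0 < s → 0 ≤ ρ s := fun s hs => (hρ s hs.le) ▸ ENNReal.toReal_nonneg
  -- step 1: per ω, ofReal of inner integral as a lintegral over Ioo
  have hstep1 : ∀ ω, ENNReal.ofReal (∫ s in (0:ℝ)..(T ω), w s)
      = ∫⁻ s, (Set.Ioo (0:ℝ) (T ω)).indicator (fun s => ENNReal.ofReal (w s)) s := by
    intro ω
    rw [intervalIntegral.integral_of_le (hTpos ω), integral_Ioc_eq_integral_Ioo]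
    rw [ofReal_integral_eq_lintegral_ofReal
      ((hw.integrableOn_Icc).mono_set Set.Ioo_subset_Icc_self)
      ((ae_restrict_iff' measurableSet_Ioo).mpr
        (Filter.Eventually.of_forall fun s hs => hw0 s hs.1.le))]
    rw [← lintegral_indicator measurableSet_Ioo]
  -- the product-measurable kernel
  set E : Set (Ω × ℝ) := {p | 0 < p.2 ∧ p.2 < T p.1} with hEdef
  have hEmeas : MeasurableSet E := by
    apply MeasurableSet.inter
    · exact measurable_snd measurableSet_Ioi
    · exact measurableSet_lt measurable_snd (hT.comp measurable_fst)
  have hker : ∀ ω s, (Set.Ioo (0:ℝ) (T ω)).indicator (fun s => ENNReal.ofReal (w s)) s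
      = ENNReal.ofReal (w s) * E.indicator 1 (ω, s) := by
    intro ω s
    by_cases h : s ∈ Set.Ioo (0:ℝ) (T ω)
    · rw [Set.indicator_of_mem h, Set.indicator_of_mem (show (ω, s) ∈ E from ⟨h.1, h.2⟩)]
      simp
    · rw [Set.indicator_of_notMem h,
        Set.indicator_of_notMem (show (ω, s) ∉ E from fun hc => h ⟨hc.1, hc.2⟩)]
      simp
  have hmeas_unc : AEMeasurable (fun p : Ω × ℝ =>
      ENNReal.ofReal (w p.2) * E.indicator 1 p) (μ.prod volume) := by
    exact ((ENNReal.measurable_ofReal.comp (hw.measurable.comp measurable_snd)).mul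
      (measurable_const.indicator hEmeas)).aemeasurable
  -- step 2: swap
  have hswap : ∫⁻ ω, ∫⁻ s, ENNReal.ofReal (w s) * E.indicator 1 (ω, s) ∂volume ∂μ
      = ∫⁻ s, ∫⁻ ω, ENNReal.ofReal (w s) * E.indicator 1 (ω, s) ∂μ ∂volume :=
    lintegral_lintegral_swap hmeas_unc
  -- step 3: inner integral computation
  have hTset : ∀ s : ℝ, MeasurableSet {ω | s < T ω} := fun s =>
    measurableSet_lt measurable_const hT
  have hinner : ∀ s : ℝ, ∫⁻ ω, ENNReal.ofReal (w s) * E.indicator 1 (ω, s) ∂μ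
      = (Set.Ioi (0:ℝ)).indicator (fun s => ENNReal.ofReal (w s * ρ s)) s := by
    intro s
    by_cases hs : 0 < s
    · have : ∀ ω, E.indicator (1 : Ω × ℝ → ENNReal) (ω, s)
          = {ω | s < T ω}.indicator (1 : Ω → ENNReal) ω := by
        intro ω
        by_cases h : s < T ω
        · rw [Set.indicator_of_mem (show (ω, s) ∈ E from ⟨hs, h⟩),
            Set.indicator_of_mem (show ω ∈ {ω | s < T ω} from h)]
          rfl
        · rw [Set.indicator_of_notMem (show (ω, s) ∉ E from fun hc => h hc.2),
            Set.indicator_of_notMem (show ω ∉ {ω | s < T ω} from h)]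
      have hμ : μ {ω | s < T ω} = ENNReal.ofReal (ρ s) := by
        rw [← hρ s hs.le, ENNReal.ofReal_toReal (measure_ne_top μ _)]
      calc ∫⁻ ω, ENNReal.ofReal (w s) * E.indicator 1 (ω, s) ∂μ
          = ∫⁻ ω, ENNReal.ofReal (w s) * {ω | s < T ω}.indicator 1 ω ∂μ :=
            lintegral_congr fun ω => by rw [this ω]
        _ = ENNReal.ofReal (w s) * μ {ω | s < T ω} := by
            rw [lintegral_const_mul _ (show Measurable ({ω | s < T ω}.indicator
              (1 : Ω → ENNReal)) from measurable_const.indicator (hTset s)),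
              lintegral_indicator_one (hTset s)]
        _ = (Set.Ioi (0:ℝ)).indicator (fun s => ENNReal.ofReal (w s * ρ s)) s := by
            rw [hμ, Set.indicator_of_mem (show s ∈ Set.Ioi (0:ℝ) from hs),
              ← ENNReal.ofReal_mul (hw0 s hs.le)]
    · have hz : ∀ ω, ENNReal.ofReal (w s) * E.indicator 1 (ω, s) = 0 := by
        intro ω
        rw [Set.indicator_of_notMem (show (ω, s) ∉ E from fun hc => hs hc.1)]
        simp
      simp_rw [hz]
      rw [lintegral_zero, Set.indicator_of_notMem (show s ∉ Set.Ioi (0:ℝ) from hs)]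
  -- step 4: conclude in ℝ≥0∞
  have hmain : ∫⁻ ω, ENNReal.ofReal (∫ s in (0:ℝ)..(T ω), w s) ∂μ
      = ENNReal.ofReal (∫ s in Set.Ioi (0:ℝ), w s * ρ s) := by
    calc ∫⁻ ω, ENNReal.ofReal (∫ s in (0:ℝ)..(T ω), w s) ∂μ
        = ∫⁻ ω, ∫⁻ s, ENNReal.ofReal (w s) * E.indicator 1 (ω, s) ∂volume ∂μ := by
          refine lintegral_congr fun ω => ?_
          rw [hstep1 ω]
          exact lintegral_congr fun s => hker ω s
      _ = ∫⁻ s, ∫⁻ ω, ENNReal.ofReal (w s) * E.indicator 1 (ω, s) ∂μ ∂volume := hswap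
      _ = ∫⁻ s, (Set.Ioi (0:ℝ)).indicator (fun s => ENNReal.ofReal (w s * ρ s)) s ∂volume := by
          exact lintegral_congr hinner
      _ = ∫⁻ s in Set.Ioi (0:ℝ), ENNReal.ofReal (w s * ρ s) ∂volume :=
          lintegral_indicator measurableSet_Ioi _
      _ = ENNReal.ofReal (∫ s in Set.Ioi (0:ℝ), w s * ρ s) := by
          rw [ofReal_integral_eq_lintegral_ofReal hInt
            ((ae_restrict_iff' measurableSet_Ioi).mpr
              (Filter.Eventually.of_forall fun s hs =>
                mul_nonneg (hw0 s (le_of_lt hs)) (hρ0 s hs)))]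
  -- step 5: back to Bochner integrals
  have hWnonneg : ∀ ω, 0 ≤ ∫ s in (0:ℝ)..(T ω), w s := by
    intro ω
    apply intervalIntegral.integral_nonneg (hTpos ω)
    intro s hs
    exact hw0 s hs.1
  have hWmeas : AEStronglyMeasurable (fun ω => ∫ s in (0:ℝ)..(T ω), w s) μ := by
    have : Continuous (fun t : ℝ => ∫ s in (0:ℝ)..t, w s) :=
      intervalIntegral.continuous_primitive (fun a b => hw.intervalIntegrable a b) 0
    exact ((this.measurable).comp hT).aestronglyMeasurable
  rw [integral_eq_lintegral_of_nonneg_ae (Filter.Eventually.of_forall hWnonneg) hWmeas, hmain,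
    ENNReal.toReal_ofReal]
  exact setIntegral_nonneg measurableSet_Ioi fun s hs =>
    mul_nonneg (hw0 s (le_of_lt hs)) (hρ0 s hs)

lemma aux_mean {Ω : Type*} [MeasurableSpace Ω] (μ : Measure Ω) [IsProbabilityMeasure μ]
    (X : Ω → ℕ) (hX : Measurable X) (lam : ℝ) (hlam : 0 ≤ lam)
    (hp : ∀ k : ℕ, (μ {ω | X ω = k}).toReal = Real.exp (-lam) * lam ^ k / (k.factorial : ℝ)) :
    ∫⁻ ω, (X ω : ENNReal) ∂μ = ENNReal.ofReal lam := by
  have h1 : ∫⁻ ω, ((X ω : ℕ) : ENNReal) ∂μ = ∫⁻ k, (k : ENNReal) ∂(μ.map X) :=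
    (lintegral_map measurable_from_top hX).symm
  rw [h1, lintegral_countable']
  have h2 : ∀ k : ℕ, (μ.map X) {k} = ENNReal.ofReal (Real.exp (-lam) * lam ^ k / k.factorial) := by
    intro k
    rw [Measure.map_apply hX (measurableSet_singleton k)]
    have : X ⁻¹' {k} = {ω | X ω = k} := by ext ω; simp
    rw [this, ← hp k, ENNReal.ofReal_toReal (measure_ne_top μ _)]
  calc ∑' k : ℕ, (k : ENNReal) * (μ.map X) {k}
      = ∑' k : ℕ, (k : ENNReal) * ENNReal.ofReal (Real.exp (-lam) * lam ^ k / k.factorial) :=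
        tsum_congr fun k => by rw [h2 k]
    _ = ENNReal.ofReal lam := aux_poisson_enn lam hlam

lemma aux_hfun_int (n : ℕ) (t : ℝ) :
    ∫ s in (0:ℝ)..t, (∑ i ∈ Icc 1 n, (i : ℝ) * (1 - Real.exp (-s)) ^ (i - 1) * Real.exp (-s))
      = ∑ i ∈ Icc 1 n, (1 - Real.exp (-t)) ^ i := by
  have key : ∀ x : ℝ, HasDerivAt (fun s => ∑ i ∈ Icc 1 n, (1 - Real.exp (-s)) ^ i)
      (∑ i ∈ Icc 1 n, (i : ℝ) * (1 - Real.exp (-x)) ^ (i - 1) * Real.exp (-x)) x := by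
    intro x
    exact HasDerivAt.fun_sum fun i _ => (hasDerivAt_u x).pow i
  have hint : IntervalIntegrable
      (fun s => ∑ i ∈ Icc 1 n, (i : ℝ) * (1 - Real.exp (-s)) ^ (i - 1) * Real.exp (-s))
      MeasureTheory.volume 0 t := (Continuous.intervalIntegrable (by fun_prop) _ _)
  rw [intervalIntegral.integral_eq_sub_of_hasDerivAt (fun x _ => key x) hint]
  have : ∀ i ∈ Icc 1 n, (1 - Real.exp (-(0:ℝ))) ^ i = 0 := by
    intro i hi
    have : 1 ≤ i := (Finset.mem_Icc.mp hi).1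
    simp [zero_pow (by omega : i ≠ 0)]
  rw [Finset.sum_congr rfl this]
  simp

/-- Poisson representation: `E(S̃) = e^{H_{m-1}}` where `S̃ = m + ∑ i N^{(i)}_T`. -/
theorem stmt14
    {Ω : Type*} [MeasurableSpace Ω] (μ : Measure Ω) [IsProbabilityMeasure μ]
    (m : ℕ) (hm : 2 ≤ m)
    (N : ℕ → ℝ → Ω → ℕ) (hNmeas : ∀ i t, Measurable (N i t))
    (hNmono : ∀ i ω, Monotone fun t => N i t ω)
    (hN0 : ∀ i ω, N i 0 ω = 0)
    (hNpois : ∀ i, 1 ≤ i → i ≤ m - 1 → ∀ t, 0 ≤ t → ∀ k : ℕ,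
      (μ {ω | N i t ω = k}).toReal =
        Real.exp (-(∫ s in (0 : ℝ)..t, (1 - Real.exp (-s)) ^ (i - 1) * Real.exp (-s))) *
          (∫ s in (0 : ℝ)..t, (1 - Real.exp (-s)) ^ (i - 1) * Real.exp (-s)) ^ k /
            (k.factorial : ℝ))
    (T : Ω → ℝ) (hT : Measurable T) (hTpos : ∀ ω, 0 ≤ T ω)
    (hTdist : ∀ t, 0 ≤ t → (μ {ω | t < T ω}).toReal =
      Real.exp (-(∫ s in (0 : ℝ)..t, (1 - Real.exp (-s)) ^ (m - 1))))
    (hindepN : iIndepFun (fun i => fun ω => fun t : ℝ => N i t ω) μ)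
    (hindepT : ∀ i, IndepFun (fun ω => fun t : ℝ => N i t ω) T μ)
    :
    ∫ ω, ((m : ℝ) + ∑ i ∈ Finset.Icc 1 (m - 1), (i : ℝ) * (N i (T ω) ω : ℝ)) ∂μ =
      Real.exp ((harmonic (m - 1) : ℚ) : ℝ) := by

  classical
  set n := m - 1 with hn
  have hn1 : 1 ≤ n := by omega
  have hmn : m = n + 1 := by omega
  -- per-i facts
  have key : ∀ i ∈ Icc 1 n, Integrable (fun ω => (N i (T ω) ω : ℝ)) μ ∧
      (i : ℝ) * ∫ ω, (N i (T ω) ω : ℝ) ∂μ = ∫ ω, (1 - Real.exp (-(T ω))) ^ i ∂μ := by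
    intro i hi
    obtain ⟨hi1, hi2⟩ := Finset.mem_Icc.mp hi
    set Λi : ℝ → ℝ := fun t => (1 - Real.exp (-t)) ^ i / i with hΛidef
    have hicast : (1:ℝ) ≤ (i:ℝ) := by exact_mod_cast hi1
    have hipos : (0:ℝ) < i := by linarith
    have hΛmeas : Measurable Λi := by fun_prop
    have hΛ0 : ∀ t, 0 ≤ t → 0 ≤ Λi t := by
      intro t ht
      have hu := (aux_u_mem t ht).1
      positivity
    have hΛ1 : ∀ t, 0 ≤ t → Λi t ≤ 1 := by
      intro t ht
      obtain ⟨hu0, hu1⟩ := aux_u_mem t ht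
      rw [hΛidef]
      rw [div_le_one hipos]
      calc (1 - Real.exp (-t)) ^ i ≤ 1 := pow_le_one₀ hu0 hu1
        _ ≤ i := hicast
    have hΛmono : ∀ a b, 0 ≤ a → a ≤ b → Λi a ≤ Λi b := by
      intro a b ha hab
      have h1 : Real.exp (-b) ≤ Real.exp (-a) := Real.exp_le_exp.mpr (by linarith)
      have h2 := (aux_u_mem a ha).1
      rw [hΛidef]
      have hpow : (1 - Real.exp (-a)) ^ i ≤ (1 - Real.exp (-b)) ^ i :=
        pow_le_pow_left₀ h2 (by linarith) i
      exact (div_le_div_iff_of_pos_right hipos).mpr hpow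
    have hΛlip : ∀ a b, 0 ≤ a → a ≤ b → Λi b ≤ Λi a + (b - a) := by
      intro a b ha hab
      have hint1 : IntervalIntegrable (fun s => (1 - Real.exp (-s)) ^ (i-1) * Real.exp (-s))
          MeasureTheory.volume a b := Continuous.intervalIntegrable (by fun_prop) _ _
      have hdiff : Λi b - Λi a
          = ∫ s in a..b, (1 - Real.exp (-s)) ^ (i-1) * Real.exp (-s) := by
        rw [hΛidef]
        simp only []
        rw [← aux_intlam i hi1 b, ← aux_intlam i hi1 a]
        exact intervalIntegral.integral_interval_sub_left
          (Continuous.intervalIntegrable (by fun_prop) _ _)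
          (Continuous.intervalIntegrable (by fun_prop) _ _)
      have hbound : (∫ s in a..b, (1 - Real.exp (-s)) ^ (i-1) * Real.exp (-s))
          ≤ ∫ _ in a..b, (1:ℝ) := by
        apply intervalIntegral.integral_mono_on hab hint1 intervalIntegrable_const
        intro s hs
        have hs0 : 0 ≤ s := le_trans ha hs.1
        obtain ⟨hu0, hu1⟩ := aux_u_mem s hs0
        have he0 := Real.exp_nonneg (-s)
        have he1 : Real.exp (-s) ≤ 1 := Real.exp_le_one_iff.mpr (by linarith)
        calc (1 - Real.exp (-s)) ^ (i-1) * Real.exp (-s) ≤ 1 * 1 :=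
              mul_le_mul (pow_le_one₀ hu0 hu1) he1 he0 zero_le_one
          _ = 1 := one_mul 1
      rw [intervalIntegral.integral_const, smul_eq_mul, mul_one] at hbound
      linarith
    have hmean : ∀ t, 0 ≤ t → ∫⁻ ω, (N i t ω : ENNReal) ∂μ = ENNReal.ofReal (Λi t) := by
      intro t ht
      have hI := aux_intlam i hi1 t
      refine aux_mean μ (N i t) (hNmeas i t) (Λi t) (hΛ0 t ht) fun k => ?_
      have hh := hNpois i hi1 (by omega : i ≤ m - 1) t ht k
      rw [hI] at hh
      exact hh
    obtain ⟨hAE, hint⟩ := aux_squeeze μ (N i) (hNmeas i) (hNmono i) T hT hTpos (hindepT i)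
      Λi hΛmeas hΛ0 hΛ1 hΛmono hΛlip hmean
    have hLle : ∫⁻ ω, ENNReal.ofReal (Λi (T ω)) ∂μ ≤ 1 := by
      calc ∫⁻ ω, ENNReal.ofReal (Λi (T ω)) ∂μ ≤ ∫⁻ _, 1 ∂μ :=
            lintegral_mono fun ω => ENNReal.ofReal_le_one.mpr (hΛ1 _ (hTpos ω))
        _ = 1 := by simp
    have haes : AEStronglyMeasurable (fun ω => (N i (T ω) ω : ℝ)) μ := by
      have h1 := hAE.ennreal_toReal
      have heq : (fun ω => ((N i (T ω) ω : ENNReal)).toReal) = fun ω => (N i (T ω) ω : ℝ) :=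
        funext fun ω => by simp
      rw [heq] at h1
      exact h1.aestronglyMeasurable
    have hIntN : Integrable (fun ω => (N i (T ω) ω : ℝ)) μ := by
      refine ⟨haes, ?_⟩
      rw [hasFiniteIntegral_iff_ofReal (Filter.Eventually.of_forall fun ω => by positivity)]
      have heq2 : (fun ω => ENNReal.ofReal ((N i (T ω) ω : ℝ)))
          = fun ω => (N i (T ω) ω : ENNReal) := funext fun ω => ENNReal.ofReal_natCast _
      rw [heq2, hint]
      exact lt_of_le_of_lt hLle ENNReal.one_lt_top
    have hval : ∫ ω, (N i (T ω) ω : ℝ) ∂μ = ∫ ω, Λi (T ω) ∂μ := by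
      rw [integral_eq_lintegral_of_nonneg_ae
          (Filter.Eventually.of_forall fun ω => by positivity) haes,
        integral_eq_lintegral_of_nonneg_ae
          (Filter.Eventually.of_forall fun ω => hΛ0 _ (hTpos ω))
          ((hΛmeas.comp hT)).aestronglyMeasurable]
      congr 1
      rw [← hint]
      exact lintegral_congr fun ω => ENNReal.ofReal_natCast _
    refine ⟨hIntN, ?_⟩
    have hdivi : ∫ ω, Λi (T ω) ∂μ = (∫ ω, (1 - Real.exp (-(T ω))) ^ i ∂μ) / i := by
      rw [hΛidef]
      exact integral_div _ _
    rw [hval, hdivi]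
    field_simp
  -- integrability of summands
  have hNint : ∀ i ∈ Icc 1 n, Integrable (fun ω => (i:ℝ) * (N i (T ω) ω : ℝ)) μ :=
    fun i hi => ((key i hi).1.const_mul _)
  have hu_int : ∀ i ∈ Icc 1 n, Integrable (fun ω => (1 - Real.exp (-(T ω))) ^ i) μ := by
    intro i _
    apply Integrable.mono' (integrable_const (1:ℝ))
    · exact (((by fun_prop : Measurable fun t : ℝ => (1 - Real.exp (-t)) ^ i)).comp
        hT).aestronglyMeasurable
    · refine Filter.Eventually.of_forall fun ω => ?_
      obtain ⟨h0, h1⟩ := aux_u_mem (T ω) (hTpos ω)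
      rw [Real.norm_eq_abs, abs_of_nonneg (by positivity)]
      exact pow_le_one₀ h0 h1
  have hsplit : ∫ ω, ((m : ℝ) + ∑ i ∈ Icc 1 n, (i : ℝ) * (N i (T ω) ω : ℝ)) ∂μ
      = (m : ℝ) + ∑ i ∈ Icc 1 n, (i : ℝ) * ∫ ω, (N i (T ω) ω : ℝ) ∂μ := by
    rw [integral_add (integrable_const _) (integrable_finset_sum _ hNint),
      integral_finset_sum _ hNint, integral_const]
    simp only [probReal_univ, one_smul]
    congr 1
    exact Finset.sum_congr rfl fun i _ => integral_const_mul _ _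
  have hsum2 : ∑ i ∈ Icc 1 n, (i : ℝ) * ∫ ω, (N i (T ω) ω : ℝ) ∂μ
      = ∫ ω, ∑ i ∈ Icc 1 n, (1 - Real.exp (-(T ω))) ^ i ∂μ := by
    rw [integral_finset_sum _ hu_int]
    exact Finset.sum_congr rfl fun i hi => (key i hi).2
  set w : ℝ → ℝ :=
    fun s => ∑ i ∈ Icc 1 n, (i : ℝ) * (1 - Real.exp (-s)) ^ (i - 1) * Real.exp (-s) with hwdef
  set ρ : ℝ → ℝ :=
    fun s => Real.exp (-(s - ∑ j ∈ Icc 1 n, (1 - Real.exp (-s)) ^ j / j)) with hρdef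
  have hw0 : ∀ s, 0 ≤ s → 0 ≤ w s := by
    intro s hs
    apply Finset.sum_nonneg
    intro i _
    have := (aux_u_mem s hs).1
    positivity
  have htone : ∫ ω, ∑ i ∈ Icc 1 n, (1 - Real.exp (-(T ω))) ^ i ∂μ
      = ∫ s in Set.Ioi (0:ℝ), w s * ρ s := by
    have h1 : ∀ ω, ∑ i ∈ Icc 1 n, (1 - Real.exp (-(T ω))) ^ i = ∫ s in (0:ℝ)..(T ω), w s :=
      fun ω => (aux_hfun_int n (T ω)).symm
    calc ∫ ω, ∑ i ∈ Icc 1 n, (1 - Real.exp (-(T ω))) ^ i ∂μ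
        = ∫ ω, (∫ s in (0:ℝ)..(T ω), w s) ∂μ :=
          integral_congr_ae (Filter.Eventually.of_forall h1)
      _ = ∫ s in Set.Ioi (0:ℝ), w s * ρ s := by
          apply aux_tonelli μ T hT hTpos w (by fun_prop) hw0 ρ (by fun_prop) ?_ (aux_calc n).1
          intro s hs
          rw [hTdist s hs, aux_intlam_m n s]
  have hcalc := (aux_calc n).2
  have hH : ((harmonic (m - 1) : ℚ) : ℝ) = ∑ j ∈ Icc 1 n, (j : ℝ)⁻¹ := by
    rw [harmonic_eq_sum_Icc]
    push_cast
    rfl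
  rw [hsplit, hsum2, htone, hcalc, hH]
  have hmr : (m : ℝ) = (n : ℝ) + 1 := by rw [hmn]; push_cast; ring
  linarith
end
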